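/- arXiv:1203.4596 — 4 statements merged into one kernel-verified Lean document; each statement's English description precedes it below -/
import Mathlib

section
/- Let H be a separable real Hilbert space, α ∈ (0,1) and F ∈ C_α([0,1];H). Then for every n ≥ 0, ‖∫_{[0,1]} χ_n dF‖_H ≤ ‖F‖_α / c_n(α), where c_0(α) = 1 and c_n(α) = 2^{k(α−1/2)+α−1} for n = 2^k + l, 0 ≤ l ≤ 2^k − 1. Moreover, if F ∈ C_α^0([0,1];H), then c_n(α) ‖∫_{[0,1]} χ_n dF‖_H → 0 as n → ∞. -/
open MeasureTheory Filter Set Topology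
open scoped ENNReal NNReal

noncomputable section

namespace SchilderHilbert

/-- For `n ≥ 1`, the dyadic level `k` with `n = 2^k + l`, `0 ≤ l ≤ 2^k - 1`. -/
def haarK (n : ℕ) : ℕ := Nat.log 2 n

/-- For `n ≥ 1`, the shift `l` with `n = 2^k + l`, `0 ≤ l ≤ 2^k - 1`. -/
def haarL (n : ℕ) : ℕ := n - 2 ^ Nat.log 2 n

/-- The Haar functions on `[0,1]`. -/
noncomputable def haar (n : ℕ) (t : ℝ) : ℝ :=
  if n = 0 then 1
  else
    if (2 * haarL n : ℝ) / 2 ^ (haarK n + 1) ≤ t ∧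
        t < (2 * haarL n + 1 : ℝ) / 2 ^ (haarK n + 1) then
      2 ^ ((haarK n : ℝ) / 2)
    else if (2 * haarL n + 1 : ℝ) / 2 ^ (haarK n + 1) ≤ t ∧
        t ≤ (2 * haarL n + 2 : ℝ) / 2 ^ (haarK n + 1) then
      -(2 ^ ((haarK n : ℝ) / 2))
    else 0

/-- The Schauder functions, primitives of the Haar functions. -/
noncomputable def schauder (n : ℕ) (t : ℝ) : ℝ := ∫ s in (0:ℝ)..t, haar n s

/-- `∫_{[0,1]} χ_n dF`, the Haar coefficient of an `H`-valued function `F`. -/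
noncomputable def haarCoeff {H : Type*} [NormedAddCommGroup H] [NormedSpace ℝ H]
    (F : ℝ → H) (n : ℕ) : H :=
  if n = 0 then F 1 - F 0
  else
    (2 : ℝ) ^ ((haarK n : ℝ) / 2) •
      ((2 : ℝ) • F ((2 * haarL n + 1 : ℝ) / 2 ^ (haarK n + 1))
        - F ((2 * haarL n + 2 : ℝ) / 2 ^ (haarK n + 1))
        - F ((2 * haarL n : ℝ) / 2 ^ (haarK n + 1)))

/-- The Ciesielski coefficients `c_n(α)`: `c_0(α) = 1` and
`c_n(α) = 2^{k(α-1/2)+α-1}` for `n = 2^k + l`, `0 ≤ l ≤ 2^k - 1`. -/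
noncomputable def cCoef (α : ℝ) (n : ℕ) : ℝ :=
  if n = 0 then 1 else 2 ^ ((haarK n : ℝ) * (α - 1/2) + α - 1)

/-- The `α`-Hölder seminorm on `[0,1]` of an `H`-valued function. -/
noncomputable def holderSemi {H : Type*} [NormedAddCommGroup H] (α : ℝ) (F : ℝ → H) : ℝ :=
  sSup {r : ℝ | ∃ s ∈ Icc (0:ℝ) 1, ∃ t ∈ Icc (0:ℝ) 1, s < t ∧ r = ‖F t - F s‖ / (t - s) ^ α}

/-- Membership in `C_α([0,1];H)`: finite `α`-Hölder seminorm on `[0,1]`. -/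
def MemHolder {H : Type*} [NormedAddCommGroup H] (α : ℝ) (F : ℝ → H) : Prop :=
  ∃ C : ℝ, ∀ s ∈ Icc (0:ℝ) 1, ∀ t ∈ Icc (0:ℝ) 1, ‖F t - F s‖ ≤ C * |t - s| ^ α

/-- Membership in `C_α^0([0,1];H)`: `F(0) = 0`, finite `α`-Hölder seminorm and
vanishing `α`-Hölder modulus of continuity. -/
def MemHolder0 {H : Type*} [NormedAddCommGroup H] (α : ℝ) (F : ℝ → H) : Prop :=
  F 0 = 0 ∧ MemHolder α F ∧
    ∀ ε > 0, ∃ δ > 0, ∀ s ∈ Icc (0:ℝ) 1, ∀ t ∈ Icc (0:ℝ) 1,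
      s ≠ t → |t - s| < δ → ‖F t - F s‖ ≤ ε * |t - s| ^ α

/-- key lemma -/
lemma key {H : Type*} [NormedAddCommGroup H] [NormedSpace ℝ H]
    (α : ℝ) (F : ℝ → H) {n : ℕ} (hn : n ≠ 0) (E : ℝ)
    (h : ∀ s t : ℝ, 0 ≤ s → t ≤ 1 → s < t → t - s = 1 / 2 ^ (haarK n + 1) →
      ‖F t - F s‖ ≤ E * (t - s) ^ α) :
    cCoef α n * ‖haarCoeff F n‖ ≤ E := by
  set k := haarK n with hk
  set l := haarL n with hl
  have hD : (0:ℝ) < 2 ^ (k + 1) := by positivity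
  set a : ℝ := (2 * l : ℝ) / 2 ^ (k + 1) with ha
  set m : ℝ := (2 * l + 1 : ℝ) / 2 ^ (k + 1) with hm
  set b : ℝ := (2 * l + 2 : ℝ) / 2 ^ (k + 1) with hb
  have hma : m - a = 1 / 2 ^ (k + 1) := by rw [ha, hm, div_sub_div_same]; ring_nf
  have hbm : b - m = 1 / 2 ^ (k + 1) := by rw [hb, hm, div_sub_div_same]; ring_nf
  have ha0 : 0 ≤ a := by positivity
  have hDpos : (0:ℝ) < 1 / 2 ^ (k + 1) := by positivity
  have ham : a < m := by linarith
  have hmb : m < b := by linarith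
  have hlk : l + 1 ≤ 2 ^ k := by
    have h1 : 2 ^ k ≤ n := Nat.pow_log_le_self 2 hn
    have h2 : n < 2 ^ (k + 1) := Nat.lt_pow_succ_log_self (by norm_num) n
    have : l = n - 2 ^ k := rfl
    omega
  have hb1 : b ≤ 1 := by
    rw [hb, div_le_one hD]
    have : ((l:ℝ) + 1) ≤ 2 ^ k := by exact_mod_cast Nat.cast_le.mpr hlk
    have h2 : ((2:ℝ)) ^ (k+1) = 2 * 2 ^ k := by ring
    push_cast at this ⊢
    nlinarith
  -- rewrite haarCoeff
  have hcoeff : haarCoeff F n = (2:ℝ) ^ ((k:ℝ)/2) • ((F m - F a) + (F m - F b)) := by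
    rw [haarCoeff, if_neg hn]
    congr 1
    rw [two_smul ℝ (F m)]
    abel
  have hnorm : ‖haarCoeff F n‖ = (2:ℝ) ^ ((k:ℝ)/2) * ‖(F m - F a) + (F m - F b)‖ := by
    rw [hcoeff, norm_smul, Real.norm_eq_abs,
      abs_of_pos (Real.rpow_pos_of_pos two_pos _)]
  have h1 : ‖F m - F a‖ ≤ E * (m - a) ^ α := h a m ha0 (by linarith) ham hma
  have h2 : ‖F m - F b‖ ≤ E * (b - m) ^ α := by
    have := h m b (by linarith) hb1 hmb hbm
    rwa [← norm_neg, neg_sub] at this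
  have hcpos : (0:ℝ) < cCoef α n := by
    rw [cCoef, if_neg hn]; exact Real.rpow_pos_of_pos two_pos _
  have hprod : cCoef α n * ((2:ℝ) ^ ((k:ℝ)/2) * (2 * (1 / 2 ^ (k + 1)) ^ α)) = 1 := by
    have hpow : ((1:ℝ) / 2 ^ (k + 1)) = (2:ℝ) ^ (-(((k:ℝ)) + 1)) := by
      rw [one_div, Real.rpow_neg two_pos.le, ← Real.rpow_natCast 2 (k+1)]
      push_cast
      ring_nf
    rw [cCoef, if_neg hn, hpow, ← Real.rpow_mul two_pos.le, ← hk]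
    rw [show (2:ℝ) * (2:ℝ) ^ ((-((k:ℝ)+1)) * α) = (2:ℝ) ^ ((-((k:ℝ)+1)) * α + 1) by
      rw [Real.rpow_add_one two_pos.ne']; ring]
    rw [← Real.rpow_add two_pos, ← Real.rpow_add two_pos]
    rw [show ((k:ℝ) * (α - 1/2) + α - 1 + ((k:ℝ)/2 + (-((k:ℝ)+1) * α + 1))) = 0 by ring,
      Real.rpow_zero]
  calc cCoef α n * ‖haarCoeff F n‖
      = cCoef α n * ((2:ℝ) ^ ((k:ℝ)/2) * ‖(F m - F a) + (F m - F b)‖) := by rw [hnorm]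
    _ ≤ cCoef α n * ((2:ℝ) ^ ((k:ℝ)/2) * (E * (m - a) ^ α + E * (b - m) ^ α)) := by
        apply mul_le_mul_of_nonneg_left _ hcpos.le
        apply mul_le_mul_of_nonneg_left _ (Real.rpow_pos_of_pos two_pos _).le
        exact le_trans (norm_add_le _ _) (add_le_add h1 h2)
    _ = E * (cCoef α n * ((2:ℝ) ^ ((k:ℝ)/2) * (2 * (1 / 2 ^ (k + 1)) ^ α))) := by
        rw [hma, hbm]; ring
    _ = E := by rw [hprod, mul_one]

/-- **Bound on Haar coefficients of Hölder functions**: for `F ∈ C_α([0,1];H)`,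
`‖∫_{[0,1]} χ_n dF‖ ≤ ‖F‖_α / c_n(α)`, and if moreover `F ∈ C_α^0([0,1];H)` then
`c_n(α) ‖∫_{[0,1]} χ_n dF‖ → 0` as `n → ∞`. -/
theorem haarCoeff_bound_and_tendsto
    {H : Type*} [NormedAddCommGroup H] [InnerProductSpace ℝ H] [CompleteSpace H] [SecondCountableTopology H]
    (α : ℝ) (hα : α ∈ Ioo (0:ℝ) 1) (F : ℝ → H) (hF : MemHolder α F) :
    (∀ n : ℕ, ‖haarCoeff F n‖ ≤ holderSemi α F / cCoef α n) ∧
    (MemHolder0 α F →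
      Tendsto (fun n => cCoef α n * ‖haarCoeff F n‖) atTop (𝓝 0)) := by
  obtain ⟨hα0, hα1⟩ := hα
  set S := holderSemi α F with hS
  have hbdd : BddAbove {r : ℝ | ∃ s ∈ Icc (0:ℝ) 1, ∃ t ∈ Icc (0:ℝ) 1,
      s < t ∧ r = ‖F t - F s‖ / (t - s) ^ α} := by
    obtain ⟨C, hC⟩ := hF
    refine ⟨C, ?_⟩
    rintro r ⟨s, hs, t, ht, hst, rfl⟩
    have hpos : (0:ℝ) < (t - s) ^ α := Real.rpow_pos_of_pos (by linarith) α
    rw [div_le_iff₀ hpos]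
    have := hC s hs t ht
    rwa [abs_of_pos (by linarith : (0:ℝ) < t - s)] at this
  have hSle : ∀ s ∈ Icc (0:ℝ) 1, ∀ t ∈ Icc (0:ℝ) 1, s < t →
      ‖F t - F s‖ ≤ S * (t - s) ^ α := by
    intro s hs t ht hst
    have hpos : (0:ℝ) < (t - s) ^ α := Real.rpow_pos_of_pos (by linarith) α
    have := le_csSup hbdd (⟨s, hs, t, ht, hst, rfl⟩ :
      ‖F t - F s‖ / (t - s) ^ α ∈ {r : ℝ | ∃ s ∈ Icc (0:ℝ) 1, ∃ t ∈ Icc (0:ℝ) 1,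
        s < t ∧ r = ‖F t - F s‖ / (t - s) ^ α})
    rwa [div_le_iff₀ hpos] at this
  constructor
  · intro n
    by_cases hn : n = 0
    · subst hn
      simp only [haarCoeff, cCoef, if_pos rfl, div_one]
      have := hSle 0 (by norm_num) 1 (by norm_num) (by norm_num)
      simpa [Real.one_rpow] using this
    · have hcpos : (0:ℝ) < cCoef α n := by
        rw [cCoef, if_neg hn]; exact Real.rpow_pos_of_pos two_pos _
      rw [le_div_iff₀ hcpos, mul_comm]
      apply key α F hn
      intro s t hs0 ht1 hst _
      exact hSle s ⟨hs0, by linarith⟩ t ⟨by linarith, ht1⟩ hst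
  · rintro ⟨-, -, hmod⟩
    rw [Metric.tendsto_atTop]
    intro ε hε
    obtain ⟨δ, hδ, hδ'⟩ := hmod (ε/2) (by linarith)
    obtain ⟨K, hK⟩ := exists_pow_lt_of_lt_one hδ (by norm_num : (1:ℝ)/2 < 1)
    refine ⟨2 ^ K, fun n hnN => ?_⟩
    have hn : n ≠ 0 := by
      have := Nat.one_le_two_pow (n := K); omega
    have hkK : K ≤ haarK n := (Nat.le_log_iff_pow_le (by norm_num) hn).mpr hnN
    have hsmall : (1:ℝ) / 2 ^ (haarK n + 1) < δ := by
      calc (1:ℝ) / 2 ^ (haarK n + 1) ≤ 1 / 2 ^ K := by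
            apply one_div_le_one_div_of_le (by positivity)
            exact pow_le_pow_right₀ (by norm_num) (by omega)
        _ = ((1:ℝ)/2) ^ K := by rw [div_pow, one_pow]
        _ < δ := hK
    have hcpos : (0:ℝ) < cCoef α n := by
      rw [cCoef, if_neg hn]; exact Real.rpow_pos_of_pos two_pos _
    have hb : cCoef α n * ‖haarCoeff F n‖ ≤ ε / 2 := by
      apply key α F hn
      intro s t hs0 ht1 hst heq
      have habs : |t - s| < δ := by
        rw [abs_of_pos (by linarith), heq]; exact hsmall
      have := hδ' s ⟨hs0, by linarith⟩ t ⟨by linarith, ht1⟩ (ne_of_lt hst) habs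
      rwa [abs_of_pos (sub_pos.mpr hst)] at this
    rw [Real.dist_eq, sub_zero,
      abs_of_nonneg (mul_nonneg hcpos.le (norm_nonneg _))]
    linarith


end SchilderHilbert
end
end

section
/- Let X be a Hausdorff topological space with Borel σ-algebra ℬ, let I: X → [0,∞] be a rate function (lower semicontinuous), and let (μ_ε)_{ε>0} be an exponentially tight family of Borel probability measures on X. Let 𝒢_0 be a collection of open subsets of X such that for every open G ⊂ X and every x ∈ G there exists G_0 ∈ 𝒢_0 with x ∈ G_0 ⊂ G. Assume that for every G ∈ 𝒢_0, lim_{ε→0} ε log μ_ε(G) = −inf_{x∈G} I(x). Then I is a good rate function and (μ_ε)_{ε>0} satisfies the large deviation principle with rate function I: for every closed F ⊂ X, limsup_{ε→0} ε log μ_ε(F) ≤ −inf_{x∈F} I(x), and for every open G ⊂ X, liminf_{ε→0} ε log μ_ε(G) ≥ −inf_{x∈G} I(x). -/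
open MeasureTheory Filter Set Topology
open scoped ENNReal NNReal

noncomputable section

namespace SchilderHilbert

private lemma ereal_le_of_forall_real_gt {a c : EReal}
    (h : ∀ b : ℝ, a < b → c ≤ b) : c ≤ a := by
  by_contra hc
  push_neg at hc
  obtain ⟨b, hab, hbc⟩ := EReal.exists_between_coe_real hc
  exact absurd (h b hab) (not_le.mpr hbc)

private lemma ereal_le_coe_biInf {X : Type*} {s : Set X} {g : X → ℝ≥0∞} {c : EReal}
    (h : ∀ x ∈ s, c ≤ (g x : EReal)) : c ≤ ((⨅ x ∈ s, g x : ℝ≥0∞) : EReal) := by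
  by_contra hc
  push_neg at hc
  obtain ⟨r, h1, h2⟩ := EReal.exists_between_coe_real hc
  have hr0 : (0 : EReal) < (r : EReal) := lt_of_le_of_lt (EReal.coe_ennreal_nonneg _) h1
  have hr : (0 : ℝ) ≤ r := by exact_mod_cast hr0.le
  have hlt : (⨅ x ∈ s, g x) < ENNReal.ofReal r := by
    rw [← EReal.coe_ennreal_lt_coe_ennreal_iff, EReal.coe_ennreal_ofReal, max_eq_left hr]
    exact h1
  rw [iInf_lt_iff] at hlt
  obtain ⟨x, hx⟩ := hlt
  rw [iInf_lt_iff] at hx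
  obtain ⟨hxs, hgx⟩ := hx
  have hcx : c ≤ (g x : EReal) := h x hxs
  have hgr : ((g x : ℝ≥0∞) : EReal) < (r : EReal) := by
    calc ((g x : ℝ≥0∞) : EReal) < ((ENNReal.ofReal r : ℝ≥0∞) : EReal) :=
          EReal.coe_ennreal_lt_coe_ennreal_iff.mpr hgx
      _ = ((max r 0 : ℝ) : EReal) := EReal.coe_ennreal_ofReal
      _ = (r : EReal) := by rw [max_eq_left hr]
  exact absurd (hcx.trans_lt (hgr.trans h2)) (lt_irrefl c)

private lemma ereal_mul_add_real (ε r : ℝ) (q : EReal) (hε : 0 < ε) :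
    (ε : EReal) * ((r : EReal) + q) = ((ε * r : ℝ) : EReal) + (ε : EReal) * q := by
  induction q using EReal.rec with
  | bot =>
      rw [show ((r : EReal) + ⊥) = ⊥ from EReal.add_bot _,
        EReal.coe_mul_bot_of_pos hε, EReal.add_bot]
  | top =>
      rw [show ((r : EReal) + ⊤) = ⊤ from EReal.coe_add_top _,
        EReal.coe_mul_top_of_pos hε, EReal.coe_add_top]
  | coe a =>
      rw [← EReal.coe_add, ← EReal.coe_mul, ← EReal.coe_mul, ← EReal.coe_add]
      exact congrArg _ (by ring)

section Aux

variable {X : Type*} [TopologicalSpace X] [MeasurableSpace X] (μ : ℝ → Measure X)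

private lemma limsup_mono_set {A B : Set X} (h : A ⊆ B) :
    Filter.limsup (fun ε : ℝ => (ε : EReal) * ENNReal.log (μ ε A)) (𝓝[>] (0:ℝ))
      ≤ Filter.limsup (fun ε : ℝ => (ε : EReal) * ENNReal.log (μ ε B)) (𝓝[>] (0:ℝ)) := by
  refine limsup_le_limsup ?_
  filter_upwards [eventually_mem_nhdsWithin] with ε (hε : ε ∈ Ioi (0:ℝ))
  exact mul_le_mul_of_nonneg_left (ENNReal.log_monotone (measure_mono h))
    (by exact_mod_cast (le_of_lt hε))

private lemma liminf_mono_set {A B : Set X} (h : A ⊆ B) :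
    Filter.liminf (fun ε : ℝ => (ε : EReal) * ENNReal.log (μ ε A)) (𝓝[>] (0:ℝ))
      ≤ Filter.liminf (fun ε : ℝ => (ε : EReal) * ENNReal.log (μ ε B)) (𝓝[>] (0:ℝ)) := by
  refine liminf_le_liminf ?_
  filter_upwards [eventually_mem_nhdsWithin] with ε (hε : ε ∈ Ioi (0:ℝ))
  exact mul_le_mul_of_nonneg_left (ENNReal.log_monotone (measure_mono h))
    (by exact_mod_cast (le_of_lt hε))

private lemma limsup_union_le (A B : Set X) :
    Filter.limsup (fun ε : ℝ => (ε : EReal) * ENNReal.log (μ ε (A ∪ B))) (𝓝[>] (0:ℝ))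
      ≤ max (Filter.limsup (fun ε : ℝ => (ε : EReal) * ENNReal.log (μ ε A)) (𝓝[>] (0:ℝ)))
          (Filter.limsup (fun ε : ℝ => (ε : EReal) * ENNReal.log (μ ε B)) (𝓝[>] (0:ℝ))) := by
  refine ereal_le_of_forall_real_gt fun b hb => ?_
  obtain ⟨c, hc1, hc2⟩ := EReal.exists_between_coe_real hb
  have hcb : c < b := by exact_mod_cast hc2
  have h1 := eventually_lt_of_limsup_lt ((le_max_left _ _).trans_lt hc1)
  have h2 := eventually_lt_of_limsup_lt ((le_max_right _ _).trans_lt hc1)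
  have h3 : ∀ᶠ ε in 𝓝[>] (0:ℝ), ε * Real.log 2 < b - c := by
    have ht : Tendsto (fun ε : ℝ => ε * Real.log 2) (𝓝[>] (0:ℝ)) (𝓝 0) := by
      have h0 : Tendsto (fun ε : ℝ => ε * Real.log 2) (𝓝 (0:ℝ)) (𝓝 (0 * Real.log 2)) :=
        (continuous_id.mul continuous_const).tendsto 0
      rw [zero_mul] at h0
      exact h0.mono_left nhdsWithin_le_nhds
    exact ht.eventually_lt_const (by linarith)
  refine limsup_le_of_le (by isBoundedDefault) ?_
  filter_upwards [h1, h2, h3, eventually_mem_nhdsWithin] with ε h1 h2 h3 hε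
  have hε : (0:ℝ) < ε := hε
  have hμ : μ ε (A ∪ B) ≤ 2 * max (μ ε A) (μ ε B) := by
    calc μ ε (A ∪ B) ≤ μ ε A + μ ε B := measure_union_le _ _
      _ ≤ max (μ ε A) (μ ε B) + max (μ ε A) (μ ε B) :=
          add_le_add (le_max_left _ _) (le_max_right _ _)
      _ = 2 * max (μ ε A) (μ ε B) := (two_mul _).symm
  have hlog : ENNReal.log (μ ε (A ∪ B))
      ≤ ((Real.log 2 : ℝ) : EReal) + ENNReal.log (max (μ ε A) (μ ε B)) := by
    refine (ENNReal.log_monotone hμ).trans_eq ?_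
    rw [ENNReal.log_mul_add]
    congr 1
    rw [show (2 : ℝ≥0∞) = ENNReal.ofReal 2 by simp]
    exact ENNReal.log_ofReal_of_pos (by norm_num)
  calc (ε : EReal) * ENNReal.log (μ ε (A ∪ B))
      ≤ (ε : EReal) * (((Real.log 2 : ℝ) : EReal) + ENNReal.log (max (μ ε A) (μ ε B))) :=
        mul_le_mul_of_nonneg_left hlog (by exact_mod_cast hε.le)
    _ = ((ε * Real.log 2 : ℝ) : EReal) + (ε : EReal) * ENNReal.log (max (μ ε A) (μ ε B)) :=
        ereal_mul_add_real _ _ _ hε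
    _ ≤ ((ε * Real.log 2 : ℝ) : EReal) + (c : EReal) := by
        refine add_le_add le_rfl ?_
        rcases max_cases (μ ε A) (μ ε B) with ⟨hM, _⟩ | ⟨hM, _⟩ <;> rw [hM]
        · exact h1.le
        · exact h2.le
    _ ≤ (b : EReal) := by
        rw [← EReal.coe_add]
        exact EReal.coe_le_coe_iff.mpr (by linarith)

private lemma limsup_biUnion_le {ι : Type*} (s : Finset ι) (A : ι → Set X) {c : EReal}
    (h : ∀ i ∈ s, Filter.limsup (fun ε : ℝ => (ε : EReal) * ENNReal.log (μ ε (A i)))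
      (𝓝[>] (0:ℝ)) ≤ c) :
    Filter.limsup (fun ε : ℝ => (ε : EReal) * ENNReal.log (μ ε (⋃ i ∈ s, A i)))
      (𝓝[>] (0:ℝ)) ≤ c := by
  classical
  induction s using Finset.induction_on with
  | empty =>
      refine le_trans (le_of_eq ?_) bot_le
      have : ∀ᶠ ε : ℝ in 𝓝[>] (0:ℝ),
          (ε : EReal) * ENNReal.log (μ ε (⋃ i ∈ (∅ : Finset ι), A i)) = ⊥ := by
        filter_upwards [eventually_mem_nhdsWithin] with ε (hε : ε ∈ Ioi (0:ℝ))
        simp only [Finset.notMem_empty, iUnion_of_empty, iUnion_empty, measure_empty,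
          ENNReal.log_zero]
        exact EReal.coe_mul_bot_of_pos hε
      refine le_antisymm ?_ bot_le
      refine limsup_le_of_le (by isBoundedDefault) ?_
      filter_upwards [this] with ε hε using le_of_eq hε
  | @insert a s' hnot ih =>
      have := limsup_union_le μ (A a) (⋃ i ∈ s', A i)
      rw [← Finset.set_biUnion_insert] at this
      refine this.trans (max_le (h _ (Finset.mem_insert_self _ _))
        (ih fun i hi => h i (Finset.mem_insert_of_mem hi)))

private lemma limsup_le_zero (hprob : ∀ ε : ℝ, 0 < ε → IsProbabilityMeasure (μ ε)) (A : Set X) :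
    Filter.limsup (fun ε : ℝ => (ε : EReal) * ENNReal.log (μ ε A)) (𝓝[>] (0:ℝ)) ≤ 0 := by
  refine limsup_le_of_le (by isBoundedDefault) ?_
  filter_upwards [eventually_mem_nhdsWithin] with ε (hε : ε ∈ Ioi (0:ℝ))
  have := hprob ε hε
  have hlog : ENNReal.log (μ ε A) ≤ 0 := ENNReal.log_le_zero_iff.mpr prob_le_one
  calc (ε : EReal) * ENNReal.log (μ ε A) ≤ (ε : EReal) * 0 :=
        mul_le_mul_of_nonneg_left hlog (by exact_mod_cast (le_of_lt hε))
    _ = 0 := mul_zero _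

end Aux

/-- **LDP from a sub-basis of the topology** (Proposition 7): if `I` is a rate
function (lower semicontinuous, `[0,∞]`-valued), `(μ_ε)_{ε>0}` an exponentially
tight family of Borel probability measures on a Hausdorff space `X`, `𝒢₀` a
collection of open sets such that every point of every open set has a
`𝒢₀`-neighborhood inside it, and if `lim_{ε→0} ε log μ_ε(G) = -inf_G I` for every
`G ∈ 𝒢₀`, then `I` is a good rate function and `(μ_ε)` satisfies the LDP with rate
function `I`. Here `ε log μ_ε(A)` is the extended real `ε · log(μ_ε A)`, with
`log 0 = -∞`. -/
theorem ldp_from_basis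
    {X : Type*} [TopologicalSpace X] [T2Space X] [MeasurableSpace X] [BorelSpace X]
    (I : X → ℝ≥0∞) (hI : LowerSemicontinuous I)
    (μ : ℝ → Measure X) (hprob : ∀ ε : ℝ, 0 < ε → IsProbabilityMeasure (μ ε))
    (htight : ∀ a : ℝ, 0 < a → ∃ K : Set X, IsCompact K ∧
      Filter.limsup (fun ε : ℝ => (ε : EReal) * ENNReal.log (μ ε Kᶜ)) (𝓝[>] (0:ℝ))
        < -(a : EReal))
    (G0 : Set (Set X)) (hG0open : ∀ G ∈ G0, IsOpen G)
    (hbasis : ∀ G : Set X, IsOpen G → ∀ x ∈ G, ∃ G₀ ∈ G0, x ∈ G₀ ∧ G₀ ⊆ G)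
    (hlim : ∀ G ∈ G0,
      Tendsto (fun ε : ℝ => (ε : EReal) * ENNReal.log (μ ε G)) (𝓝[>] (0:ℝ))
        (𝓝 (-((⨅ x ∈ G, I x : ℝ≥0∞) : EReal)))) :
    -- `I` is a good rate function
    (∀ C : ℝ, 0 ≤ C → IsCompact {x : X | I x ≤ ENNReal.ofReal C}) ∧
    -- large deviations upper bound for closed sets
    (∀ F : Set X, IsClosed F →
      Filter.limsup (fun ε : ℝ => (ε : EReal) * ENNReal.log (μ ε F)) (𝓝[>] (0:ℝ))
        ≤ -((⨅ x ∈ F, I x : ℝ≥0∞) : EReal)) ∧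
    -- large deviations lower bound for open sets
    (∀ G : Set X, IsOpen G →
      -((⨅ x ∈ G, I x : ℝ≥0∞) : EReal)
        ≤ Filter.liminf (fun ε : ℝ => (ε : EReal) * ENNReal.log (μ ε G)) (𝓝[>] (0:ℝ))) := by
  -- lower bound for open sets
  have hlower : ∀ G : Set X, IsOpen G →
      -((⨅ x ∈ G, I x : ℝ≥0∞) : EReal)
        ≤ Filter.liminf (fun ε : ℝ => (ε : EReal) * ENNReal.log (μ ε G)) (𝓝[>] (0:ℝ)) := by
    intro G hG
    rw [EReal.neg_le]
    refine ereal_le_coe_biInf fun x hx => ?_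
    rw [← EReal.neg_le]
    obtain ⟨G₀, hG₀mem, hxG₀, hG₀sub⟩ := hbasis G hG x hx
    have h1 : -(((⨅ y ∈ G₀, I y : ℝ≥0∞)) : EReal)
        ≤ Filter.liminf (fun ε : ℝ => (ε : EReal) * ENNReal.log (μ ε G)) (𝓝[>] (0:ℝ)) := by
      rw [← (hlim G₀ hG₀mem).liminf_eq]
      exact liminf_mono_set μ hG₀sub
    refine le_trans ?_ h1
    exact EReal.neg_le_neg_iff.mpr
      (EReal.coe_ennreal_le_coe_ennreal_iff.mpr (iInf₂_le x hxG₀))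
  -- weak upper bound for compact sets
  have hcompact : ∀ K : Set X, IsCompact K →
      Filter.limsup (fun ε : ℝ => (ε : EReal) * ENNReal.log (μ ε K)) (𝓝[>] (0:ℝ))
        ≤ -((⨅ x ∈ K, I x : ℝ≥0∞) : EReal) := by
    intro K hK
    refine ereal_le_of_forall_real_gt fun b hb => ?_
    rcases lt_or_ge 0 b with hb0 | hb0
    · exact le_trans (limsup_le_zero μ hprob K) (by exact_mod_cast hb0.le)
    · have hct : ((ENNReal.ofReal (-b) : ℝ≥0∞) : EReal) = ((-b : ℝ) : EReal) := by
        rw [EReal.coe_ennreal_ofReal, max_eq_left (by linarith : (0:ℝ) ≤ -b)]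
      have hkey : ∀ x ∈ K, ∃ G : Set X, IsOpen G ∧ x ∈ G ∧
          Filter.limsup (fun ε : ℝ => (ε : EReal) * ENNReal.log (μ ε G)) (𝓝[>] (0:ℝ))
            ≤ (b : EReal) := by
        intro x hx
        have h1 : ((-b : ℝ) : EReal) < ((I x : ℝ≥0∞) : EReal) := by
          have h2 : -((b : ℝ) : EReal) < ((⨅ y ∈ K, I y : ℝ≥0∞) : EReal) :=
            EReal.neg_lt_comm.mp hb
          rw [← EReal.coe_neg] at h2
          exact lt_of_lt_of_le h2 (EReal.coe_ennreal_le_coe_ennreal_iff.mpr (iInf₂_le x hx))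
        have htI : ENNReal.ofReal (-b) < I x := by
          rw [← EReal.coe_ennreal_lt_coe_ennreal_iff, hct]; exact h1
        have hev := hI x (ENNReal.ofReal (-b)) htI
        rw [eventually_nhds_iff] at hev
        obtain ⟨U, hU, hUopen, hxU⟩ := hev
        obtain ⟨G₀, hG₀mem, hxG₀, hG₀sub⟩ := hbasis U hUopen x hxU
        refine ⟨G₀, hG0open _ hG₀mem, hxG₀, ?_⟩
        rw [(hlim G₀ hG₀mem).limsup_eq]
        have hinf : ENNReal.ofReal (-b) ≤ ⨅ y ∈ G₀, I y :=
          le_iInf₂ fun y hy => (hU y (hG₀sub hy)).le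
        calc -((⨅ y ∈ G₀, I y : ℝ≥0∞) : EReal)
            ≤ -((ENNReal.ofReal (-b) : ℝ≥0∞) : EReal) :=
              EReal.neg_le_neg_iff.mpr (EReal.coe_ennreal_le_coe_ennreal_iff.mpr hinf)
          _ = (b : EReal) := by rw [hct, ← EReal.coe_neg, neg_neg]
      choose! V hVopen hxV hVls using hkey
      obtain ⟨s, hs⟩ := hK.elim_finite_subcover (fun x : K => V x)
        (fun x => hVopen x x.2) (fun y hy => mem_iUnion.mpr ⟨⟨y, hy⟩, hxV y hy⟩)
      calc Filter.limsup (fun ε : ℝ => (ε : EReal) * ENNReal.log (μ ε K)) (𝓝[>] (0:ℝ))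
          ≤ Filter.limsup (fun ε : ℝ => (ε : EReal) * ENNReal.log (μ ε (⋃ i ∈ s, V i)))
              (𝓝[>] (0:ℝ)) := limsup_mono_set μ hs
        _ ≤ (b : EReal) := limsup_biUnion_le μ s _ (fun i _ => hVls i i.2)
  -- upper bound for closed sets
  have hclosed : ∀ F : Set X, IsClosed F →
      Filter.limsup (fun ε : ℝ => (ε : EReal) * ENNReal.log (μ ε F)) (𝓝[>] (0:ℝ))
        ≤ -((⨅ x ∈ F, I x : ℝ≥0∞) : EReal) := by
    intro F hF
    refine ereal_le_of_forall_real_gt fun b hb => ?_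
    set a : ℝ := max 1 (1 - b) with ha
    have ha0 : (0 : ℝ) < a := lt_of_lt_of_le one_pos (le_max_left _ _)
    have hab : -a < b := by
      have : 1 - b ≤ a := le_max_right _ _
      linarith
    obtain ⟨K, hK, hKls⟩ := htight a ha0
    have hsplit : F ⊆ (F ∩ K) ∪ Kᶜ := fun x hx => by
      by_cases hxK : x ∈ K
      · exact Or.inl ⟨hx, hxK⟩
      · exact Or.inr hxK
    calc Filter.limsup (fun ε : ℝ => (ε : EReal) * ENNReal.log (μ ε F)) (𝓝[>] (0:ℝ))
        ≤ Filter.limsup (fun ε : ℝ => (ε : EReal) * ENNReal.log (μ ε ((F ∩ K) ∪ Kᶜ)))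
            (𝓝[>] (0:ℝ)) := limsup_mono_set μ hsplit
      _ ≤ max (Filter.limsup (fun ε : ℝ => (ε : EReal) * ENNReal.log (μ ε (F ∩ K)))
              (𝓝[>] (0:ℝ)))
            (Filter.limsup (fun ε : ℝ => (ε : EReal) * ENNReal.log (μ ε Kᶜ))
              (𝓝[>] (0:ℝ))) := limsup_union_le μ _ _
      _ ≤ (b : EReal) := by
          refine max_le ?_ ?_
          · refine le_trans (hcompact _ (hK.inter_left hF)) (le_trans ?_ hb.le)
            refine EReal.neg_le_neg_iff.mpr (EReal.coe_ennreal_le_coe_ennreal_iff.mpr ?_)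
            exact le_iInf₂ fun x hx => iInf₂_le x hx.1
          · refine le_trans hKls.le ?_
            rw [← EReal.coe_neg]
            exact EReal.coe_le_coe_iff.mpr hab.le
  -- goodness of the rate function
  have hgood : ∀ C : ℝ, 0 ≤ C → IsCompact {x : X | I x ≤ ENNReal.ofReal C} := by
    intro C hC
    obtain ⟨K, hK, hKlim⟩ := htight (C + 1) (by linarith)
    have hsub : {x : X | I x ≤ ENNReal.ofReal C} ⊆ K := by
      intro x hx
      by_contra hxK
      have hopen : IsOpen Kᶜ := hK.isClosed.isOpen_compl
      have h1 : -((⨅ y ∈ Kᶜ, I y : ℝ≥0∞) : EReal)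
          ≤ Filter.limsup (fun ε : ℝ => (ε : EReal) * ENNReal.log (μ ε Kᶜ)) (𝓝[>] (0:ℝ)) :=
        le_trans (hlower Kᶜ hopen) liminf_le_limsup
      have h2 : -((⨅ y ∈ Kᶜ, I y : ℝ≥0∞) : EReal) < -((C + 1 : ℝ) : EReal) :=
        lt_of_le_of_lt h1 hKlim
      have h3 : ((C + 1 : ℝ) : EReal) < ((⨅ y ∈ Kᶜ, I y : ℝ≥0∞) : EReal) :=
        EReal.neg_lt_neg_iff.mp h2
      have h4 : ((C + 1 : ℝ) : EReal) < ((I x : ℝ≥0∞) : EReal) :=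
        lt_of_lt_of_le h3 (EReal.coe_ennreal_le_coe_ennreal_iff.mpr (iInf₂_le x hxK))
      have h5 : ((I x : ℝ≥0∞) : EReal) ≤ ((C : ℝ) : EReal) := by
        calc ((I x : ℝ≥0∞) : EReal) ≤ ((ENNReal.ofReal C : ℝ≥0∞) : EReal) :=
              EReal.coe_ennreal_le_coe_ennreal_iff.mpr hx
          _ = ((C : ℝ) : EReal) := by
              rw [EReal.coe_ennreal_ofReal, max_eq_left hC]
      have h6 : ((C + 1 : ℝ) : EReal) < ((C : ℝ) : EReal) := lt_of_lt_of_le h4 h5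
      have : C + 1 < C := EReal.coe_lt_coe_iff.mp h6
      linarith
    exact hK.of_isClosed_subset (hI.isClosed_preimage (ENNReal.ofReal C)) hsub
  exact ⟨hgood, hclosed, hlower⟩

end SchilderHilbert
end
end

section
/- Let 0 < α < 1/2 and let G ∈ C_α^0([0,1];ℝ) have Schauder coefficients G_n = c_n(α) ∫_{[0,1]} χ_n dG, n ≥ 0. Then Ĩ(G) < ∞ if and only if Σ_{n=0}^∞ G_n² / c_n(α)² < ∞, and in that case Ĩ(G) = Σ_{n=0}^∞ G_n² / (2 c_n(α)²). -/
open MeasureTheory Filter Set Topology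
open scoped ENNReal NNReal

noncomputable section

namespace SchilderHilbert

/-- The rate function of scalar Brownian motion:
`Ĩ(f) = (1/2)∫_0^1 |ḟ(s)|² ds` if `f(t) = ∫_0^t ḟ(s) ds` on `[0,1]` for a square
integrable `ḟ`, and `Ĩ(f) = ∞` otherwise. -/
noncomputable def rateI1 (f : ℝ → ℝ) : ℝ≥0∞ :=
  ⨅ (u : ℝ → ℝ) (_ : AEStronglyMeasurable u (volume.restrict (Icc (0:ℝ) 1)))
    (_ : ∀ t ∈ Icc (0:ℝ) 1, f t = ∫ s in (0:ℝ)..t, u s),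
    (1/2 : ℝ≥0∞) * ∫⁻ s in Icc (0:ℝ) 1, ENNReal.ofReal ((u s) ^ 2)

/-! arithmetic layer -/

lemma haarK_add (k l : ℕ) (hl : l < 2 ^ k) : haarK (2 ^ k + l) = k :=
  Nat.log_eq_of_pow_le_of_lt_pow (Nat.le_add_right _ _) (by rw [pow_succ]; omega)

lemma haarL_add (k l : ℕ) (hl : l < 2 ^ k) : haarL (2 ^ k + l) = l := by
  unfold haarL
  rw [show Nat.log 2 (2 ^ k + l) = k from haarK_add k l hl]
  omega

lemma exists_kl (n : ℕ) (hn : n ≠ 0) :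
    haarL n < 2 ^ haarK n ∧ n = 2 ^ haarK n + haarL n := by
  have h1 : 2 ^ Nat.log 2 n ≤ n := Nat.pow_log_le_self 2 hn
  have h2 : n < 2 ^ (Nat.log 2 n + 1) := Nat.lt_pow_succ_log_self one_lt_two n
  rw [pow_succ] at h2
  unfold haarK haarL
  omega

/-- left endpoint -/
def pa (k l : ℕ) : ℝ := (2 * l : ℝ) / 2 ^ (k + 1)
/-- midpoint -/
def pm (k l : ℕ) : ℝ := (2 * l + 1 : ℝ) / 2 ^ (k + 1)
/-- right endpoint -/
def pb (k l : ℕ) : ℝ := (2 * l + 2 : ℝ) / 2 ^ (k + 1)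
/-- the height -/
def hh (k : ℕ) : ℝ := 2 ^ ((k : ℝ) / 2)

lemma hh_pos (k : ℕ) : 0 < hh k := Real.rpow_pos_of_pos two_pos _

lemma hh_sq (k : ℕ) : hh k * hh k = 2 ^ k := by
  unfold hh
  rw [← Real.rpow_add two_pos]
  rw [show (k : ℝ) / 2 + (k : ℝ) / 2 = (k : ℕ) by push_cast; ring]
  exact Real.rpow_natCast 2 k

lemma pa_lt_pm (k l : ℕ) : pa k l < pm k l := by
  unfold pa pm
  rw [div_lt_div_iff_of_pos_right (by positivity)]
  linarith

lemma pm_lt_pb (k l : ℕ) : pm k l < pb k l := by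
  unfold pm pb
  rw [div_lt_div_iff_of_pos_right (by positivity)]
  linarith

lemma pa_nonneg (k l : ℕ) : 0 ≤ pa k l := by unfold pa; positivity

lemma pb_le_one (k l : ℕ) (hl : l < 2 ^ k) : pb k l ≤ 1 := by
  unfold pb
  rw [div_le_one (by positivity)]
  have : (l : ℝ) + 1 ≤ 2 ^ k := by exact_mod_cast Nat.succ_le_of_lt hl
  rw [pow_succ]
  linarith

lemma pm_sub_pa (k l : ℕ) : pm k l - pa k l = 1 / 2 ^ (k + 1) := by
  unfold pm pa; rw [div_sub_div_same]; ring_nf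

lemma pb_sub_pm (k l : ℕ) : pb k l - pm k l = 1 / 2 ^ (k + 1) := by
  unfold pb pm; rw [div_sub_div_same]; ring_nf

lemma haar_apply (k l : ℕ) (hl : l < 2 ^ k) (t : ℝ) :
    haar (2 ^ k + l) t =
      if pa k l ≤ t ∧ t < pm k l then hh k
      else if pm k l ≤ t ∧ t ≤ pb k l then -hh k else 0 := by
  unfold haar
  rw [if_neg (by positivity), haarK_add k l hl, haarL_add k l hl]
  rfl

lemma haarCoeff_apply {H : Type*} [NormedAddCommGroup H] [NormedSpace ℝ H]
    (F : ℝ → H) (k l : ℕ) (hl : l < 2 ^ k) :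
    haarCoeff F (2 ^ k + l) =
      hh k • ((2 : ℝ) • F (pm k l) - F (pb k l) - F (pa k l)) := by
  unfold haarCoeff
  rw [if_neg (by positivity), haarK_add k l hl, haarL_add k l hl]
  rfl

/-! ## Integral layer -/

/-- The reference measure: Lebesgue on `[0,1]`. -/
def mu01 : Measure ℝ := volume.restrict (Icc (0:ℝ) 1)

instance : IsFiniteMeasure mu01 := by
  unfold mu01
  constructor
  rw [Measure.restrict_apply_univ, Real.volume_Icc]
  exact ENNReal.ofReal_lt_top

lemma haar_eq_ind (k l : ℕ) (hl : l < 2 ^ k) (t : ℝ) :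
    haar (2 ^ k + l) t =
      hh k * (Ico (pa k l) (pm k l)).indicator 1 t
        - hh k * (Icc (pm k l) (pb k l)).indicator 1 t := by
  rw [haar_apply k l hl]
  by_cases h1 : t ∈ Ico (pa k l) (pm k l)
  · rw [if_pos (mem_Ico.mp h1), indicator_of_mem h1,
      indicator_of_notMem (fun h => absurd h1.2 (not_lt.2 h.1))]
    simp
  · rw [if_neg (fun h => h1 (mem_Ico.mpr h)), indicator_of_notMem h1]
    by_cases h2 : t ∈ Icc (pm k l) (pb k l)
    · rw [if_pos (mem_Icc.mp h2), indicator_of_mem h2]; simp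
    · rw [if_neg (fun h => h2 (mem_Icc.mpr h)), indicator_of_notMem h2]; simp

lemma measurable_haar (n : ℕ) : Measurable (haar n) := by
  rcases eq_or_ne n 0 with rfl | hn
  · unfold haar; simp
  · obtain ⟨hl, hkl⟩ := exists_kl n hn
    have : haar n = fun t => hh (haarK n) * (Ico (pa (haarK n) (haarL n)) (pm (haarK n) (haarL n))).indicator 1 t
        - hh (haarK n) * (Icc (pm (haarK n) (haarL n)) (pb (haarK n) (haarL n))).indicator 1 t := by
      funext t; conv_lhs => rw [hkl]
      exact haar_eq_ind _ _ hl t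
    rw [this]
    exact (((measurable_one.indicator measurableSet_Ico).const_mul _).sub
      ((measurable_one.indicator measurableSet_Icc).const_mul _))

lemma abs_haar_le (n : ℕ) (t : ℝ) : ‖haar n t‖ ≤ hh (haarK n) := by
  rcases eq_or_ne n 0 with rfl | hn
  · have : Nat.log 2 0 = 0 := by simp
    simp only [haar, if_pos rfl, haarK, hh, this, norm_one, Nat.cast_zero, zero_div,
      Real.rpow_zero, if_true, le_refl]
  · obtain ⟨hl, hkl⟩ := exists_kl n hn
    conv_lhs => rw [hkl, haar_apply _ _ hl]
    have := hh_pos (haarK n)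
    split_ifs <;> simp [abs_of_pos this, abs_of_neg (neg_neg_iff_pos.mpr this)] <;> linarith

lemma memL2_haar (n : ℕ) : MemLp (haar n) 2 mu01 := by
  refine MemLp.mono_exponent (q := ⊤) ?_ le_top
  exact memLp_top_of_bound ((measurable_haar n).aestronglyMeasurable) _
    (Filter.Eventually.of_forall (abs_haar_le n))

lemma integral_ind_Ico (k l : ℕ) (hl : l < 2 ^ k) :
    ∫ x, (Ico (pa k l) (pm k l)).indicator (1 : ℝ → ℝ) x ∂mu01 = 1 / 2 ^ (k + 1) := by
  unfold mu01
  rw [← integral_indicator measurableSet_Icc]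
  rw [Set.indicator_indicator]
  rw [integral_indicator (measurableSet_Icc.inter measurableSet_Ico)]
  rw [inter_eq_right.mpr ?_]
  · simp only [Pi.one_apply]
    rw [setIntegral_const, Real.volume_real_Ico_of_le (pa_lt_pm k l).le, smul_eq_mul, mul_one,
      pm_sub_pa]
  · exact fun x hx => ⟨(pa_nonneg k l).trans hx.1,
      hx.2.le.trans ((pm_lt_pb k l).le.trans (pb_le_one k l hl))⟩

lemma integral_ind_Icc (k l : ℕ) (hl : l < 2 ^ k) :
    ∫ x, (Icc (pm k l) (pb k l)).indicator (1 : ℝ → ℝ) x ∂mu01 = 1 / 2 ^ (k + 1) := by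
  unfold mu01
  rw [← integral_indicator measurableSet_Icc]
  rw [Set.indicator_indicator]
  rw [integral_indicator (measurableSet_Icc.inter measurableSet_Icc)]
  rw [inter_eq_right.mpr ?_]
  · simp only [Pi.one_apply]
    rw [setIntegral_const, Real.volume_real_Icc_of_le (pm_lt_pb k l).le, smul_eq_mul, mul_one,
      pb_sub_pm]
  · exact fun x hx => ⟨((pa_nonneg k l).trans (pa_lt_pm k l).le).trans hx.1,
      hx.2.trans (pb_le_one k l hl)⟩

lemma integrable_ind_Ico (k l : ℕ) :
    Integrable ((Ico (pa k l) (pm k l)).indicator (1 : ℝ → ℝ)) mu01 :=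
  (integrable_const 1).indicator measurableSet_Ico

lemma integrable_ind_Icc (k l : ℕ) :
    Integrable ((Icc (pm k l) (pb k l)).indicator (1 : ℝ → ℝ)) mu01 :=
  (integrable_const 1).indicator measurableSet_Icc

lemma integral_haar (n : ℕ) (hn : n ≠ 0) : ∫ x, haar n x ∂mu01 = 0 := by
  obtain ⟨hl, hkl⟩ := exists_kl n hn
  rw [show haar n = haar (2 ^ haarK n + haarL n) by rw [← hkl]]
  rw [integral_congr_ae (Eventually.of_forall (haar_eq_ind _ _ hl))]
  rw [integral_sub ((integrable_ind_Ico _ _).const_mul _) ((integrable_ind_Icc _ _).const_mul _),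
    integral_const_mul, integral_const_mul, integral_ind_Ico _ _ hl, integral_ind_Icc _ _ hl]
  ring

lemma integral_haar_sq (n : ℕ) (hn : n ≠ 0) : ∫ x, haar n x * haar n x ∂mu01 = 1 := by
  obtain ⟨hl, hkl⟩ := exists_kl n hn
  set k := haarK n; set l := haarL n
  have key : ∀ t, haar n t * haar n t =
      hh k * hh k * (Ico (pa k l) (pm k l)).indicator 1 t
        + hh k * hh k * (Icc (pm k l) (pb k l)).indicator 1 t := by
    intro t
    conv_lhs => rw [hkl, haar_apply _ _ hl]
    by_cases h1 : t ∈ Ico (pa k l) (pm k l)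
    · rw [if_pos (mem_Ico.mp h1), indicator_of_mem h1,
        indicator_of_notMem (fun h => absurd h1.2 (not_lt.2 h.1))]
      simp
    · rw [if_neg (fun h => h1 (mem_Ico.mpr h)), indicator_of_notMem h1]
      by_cases h2 : t ∈ Icc (pm k l) (pb k l)
      · rw [if_pos (mem_Icc.mp h2), indicator_of_mem h2]; simp
      · rw [if_neg (fun h => h2 (mem_Icc.mpr h)), indicator_of_notMem h2]; simp
  rw [integral_congr_ae (Eventually.of_forall key)]
  rw [integral_add ((integrable_ind_Ico _ _).const_mul _) ((integrable_ind_Icc _ _).const_mul _),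
    integral_const_mul, integral_const_mul, integral_ind_Ico _ _ hl, integral_ind_Icc _ _ hl,
    hh_sq]
  rw [show ((2:ℝ) ^ k * (1 / 2 ^ (k+1)) + 2 ^ k * (1 / 2 ^ (k+1))) = 2^k * (2 / 2^(k+1)) by ring,
    pow_succ]
  have : (0:ℝ) < 2 ^ k := by positivity
  field_simp

/-! ## Orthogonality -/

lemma integral_congr_off_pair {f g : ℝ → ℝ} (p q : ℝ)
    (h : ∀ x, x ≠ p → x ≠ q → f x = g x) :
    ∫ x, f x ∂mu01 = ∫ x, g x ∂mu01 := by
  refine integral_congr_ae (ae_restrict_of_ae ?_)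
  have hsub : {x : ℝ | ¬ f x = g x} ⊆ {p, q} := by
    intro x hx
    by_contra hmem
    have hmem' : x ≠ p ∧ x ≠ q := by
      constructor <;> (intro he; exact hmem (by simp [he]))
    exact hx (h x hmem'.1 hmem'.2)
  exact measure_mono_null hsub ((Set.toFinite {p, q}).measure_zero volume)

lemma haar_ne_zero_bounds (k l : ℕ) (hl : l < 2 ^ k) {t : ℝ}
    (h : haar (2 ^ k + l) t ≠ 0) : pa k l ≤ t ∧ t ≤ pb k l := by
  rw [haar_apply k l hl] at h
  split_ifs at h with h1 h2
  · exact ⟨h1.1, h1.2.le.trans (pm_lt_pb k l).le⟩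
  · exact ⟨(pa_lt_pm k l).le.trans h2.1, h2.2⟩
  · exact absurd rfl h

lemma same_level (k l l' : ℕ) (hl : l < 2 ^ k) (hl' : l' < 2 ^ k) (hll : l < l') :
    ∫ x, haar (2 ^ k + l) x * haar (2 ^ k + l') x ∂mu01 = 0 := by
  have hba : pb k l ≤ pa k l' := by
    unfold pb pa
    rw [div_le_div_iff_of_pos_right (by positivity)]
    have : (l : ℝ) + 1 ≤ l' := by exact_mod_cast hll
    linarith
  rw [integral_congr_off_pair (f := fun x => haar (2^k+l) x * haar (2^k+l') x)
    (g := fun _ => 0) (pb k l) (pb k l) ?_, integral_zero]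
  intro x hx _
  show haar (2^k+l) x * haar (2^k+l') x = 0
  by_contra hne
  have h1 : haar (2^k+l) x ≠ 0 := fun h => hne (by rw [h, zero_mul])
  have h2 : haar (2^k+l') x ≠ 0 := fun h => hne (by rw [h, mul_zero])
  have b1 := (haar_ne_zero_bounds k l hl h1).2
  have b2 := (haar_ne_zero_bounds k l' hl' h2).1
  exact hx (le_antisymm b1 (hba.trans b2))

lemma diff_level (k l d l' : ℕ) (hl : l < 2 ^ k) (hl' : l' < 2 ^ (k + 1 + d)) :
    ∫ x, haar (2 ^ k + l) x * haar (2 ^ (k + 1 + d) + l') x ∂mu01 = 0 := by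
  have hk' : k + 1 + d = k + 1 + d := rfl
  have hK : (0:ℝ) < 2 ^ (k + 1 + d + 1) := by positivity
  have hpow : (2:ℝ) ^ (k + 1 + d + 1) = 2 ^ (k + 1) * 2 ^ d * 2 := by
    rw [pow_succ, pow_add]
  have hpa : pa k l = ((4 * (l * 2 ^ d) : ℕ) : ℝ) / 2 ^ (k + 1 + d + 1) := by
    unfold pa; rw [div_eq_div_iff (by positivity) hK.ne', hpow]; push_cast; ring
  have hpm : pm k l = ((4 * (l * 2 ^ d) + 2 * 2 ^ d : ℕ) : ℝ) / 2 ^ (k + 1 + d + 1) := by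
    unfold pm; rw [div_eq_div_iff (by positivity) hK.ne', hpow]; push_cast; ring
  have hpb : pb k l = ((4 * (l * 2 ^ d) + 4 * 2 ^ d : ℕ) : ℝ) / 2 ^ (k + 1 + d + 1) := by
    unfold pb; rw [div_eq_div_iff (by positivity) hK.ne', hpow]; push_cast; ring
  have hpa' : pa (k + 1 + d) l' = ((2 * l' : ℕ) : ℝ) / 2 ^ (k + 1 + d + 1) := by
    unfold pa; push_cast; try ring
  have hpb' : pb (k + 1 + d) l' = ((2 * l' + 2 : ℕ) : ℝ) / 2 ^ (k + 1 + d + 1) := by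
    unfold pb; push_cast; try ring
  have cmp : ∀ A B : ℕ, A ≤ B →
      ((A : ℕ) : ℝ) / 2 ^ (k + 1 + d + 1) ≤ ((B : ℕ) : ℝ) / 2 ^ (k + 1 + d + 1) := by
    intro A B h
    have h' : (A : ℝ) ≤ B := Nat.cast_le.mpr h
    gcongr
  have trich : 2 * l' + 2 ≤ 4 * (l * 2 ^ d)
      ∨ (4 * (l * 2 ^ d) ≤ 2 * l' ∧ 2 * l' + 2 ≤ 4 * (l * 2 ^ d) + 2 * 2 ^ d)
      ∨ (4 * (l * 2 ^ d) + 2 * 2 ^ d ≤ 2 * l' ∧ 2 * l' + 2 ≤ 4 * (l * 2 ^ d) + 4 * 2 ^ d)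
      ∨ 4 * (l * 2 ^ d) + 4 * 2 ^ d ≤ 2 * l' := by
    have key : ∀ a f' : ℕ, 1 ≤ f' → 2 * l' + 2 ≤ 4 * a
        ∨ (4 * a ≤ 2 * l' ∧ 2 * l' + 2 ≤ 4 * a + 2 * f')
        ∨ (4 * a + 2 * f' ≤ 2 * l' ∧ 2 * l' + 2 ≤ 4 * a + 4 * f')
        ∨ 4 * a + 4 * f' ≤ 2 * l' := by intro a f' h1; omega
    exact key (l * 2 ^ d) (2 ^ d) Nat.one_le_two_pow
  have hconst : ∃ c : ℝ, ∀ x ∈ Ioo (pa (k+1+d) l') (pb (k+1+d) l'), haar (2 ^ k + l) x = c := by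
    rcases trich with h1 | ⟨h2a, h2b⟩ | ⟨h3a, h3b⟩ | h4
    · refine ⟨0, fun x hx => ?_⟩
      have hxa : x < pa k l := lt_of_lt_of_le hx.2 (hpb' ▸ hpa ▸ cmp _ _ h1)
      rw [haar_apply k l hl, if_neg (fun h => absurd h.1 (not_le.2 hxa)),
        if_neg (fun h => absurd ((pa_lt_pm k l).le.trans h.1) (not_le.2 hxa))]
    · refine ⟨hh k, fun x hx => ?_⟩
      have hax : pa k l ≤ x := le_trans (hpa ▸ hpa' ▸ cmp _ _ h2a) hx.1.le
      have hxm : x < pm k l := lt_of_lt_of_le hx.2 (hpb' ▸ hpm ▸ cmp _ _ h2b)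
      rw [haar_apply k l hl, if_pos ⟨hax, hxm⟩]
    · refine ⟨-hh k, fun x hx => ?_⟩
      have hmx : pm k l ≤ x := le_trans (hpm ▸ hpa' ▸ cmp _ _ h3a) hx.1.le
      have hxb : x ≤ pb k l := hx.2.le.trans (hpb' ▸ hpb ▸ cmp _ _ h3b)
      rw [haar_apply k l hl, if_neg (fun h => absurd hmx (not_le.2 h.2)), if_pos ⟨hmx, hxb⟩]
    · refine ⟨0, fun x hx => ?_⟩
      have hbx : pb k l < x := lt_of_le_of_lt (hpb ▸ hpa' ▸ cmp _ _ h4) hx.1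
      rw [haar_apply k l hl,
        if_neg (fun h => absurd ((pm_lt_pb k l).le.trans hbx.le) (not_le.2 h.2)),
        if_neg (fun h => absurd h.2 (not_le.2 hbx))]
  obtain ⟨c, hc⟩ := hconst
  rw [integral_congr_off_pair (pa (k+1+d) l') (pb (k+1+d) l')
    (g := fun x => c * haar (2 ^ (k+1+d) + l') x) ?_]
  · rw [integral_const_mul, integral_haar _ (by positivity), mul_zero]
  · intro x hxp hxq
    show haar (2 ^ k + l) x * haar (2 ^ (k+1+d) + l') x = c * haar (2 ^ (k+1+d) + l') x
    by_cases hz : haar (2 ^ (k+1+d) + l') x = 0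
    · rw [hz, mul_zero, mul_zero]
    · have hb := haar_ne_zero_bounds (k+1+d) l' hl' hz
      rw [hc x ⟨lt_of_le_of_ne hb.1 (Ne.symm hxp), lt_of_le_of_ne hb.2 hxq⟩]

lemma haar_zero_apply (t : ℝ) : haar 0 t = 1 := by simp [haar]

lemma integral_haar_mul_zero (i j : ℕ) (hij : i ≠ j) :
    ∫ x, haar i x * haar j x ∂mu01 = 0 := by
  rcases eq_or_ne i 0 with rfl | hi
  · simp only [haar_zero_apply, one_mul]
    exact integral_haar j (Ne.symm hij)
  rcases eq_or_ne j 0 with rfl | hj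
  · simp only [haar_zero_apply, mul_one]
    exact integral_haar i hi
  obtain ⟨hli, hkli⟩ := exists_kl i hi
  obtain ⟨hlj, hklj⟩ := exists_kl j hj
  rcases lt_trichotomy (haarK i) (haarK j) with hk | hk | hk
  · obtain ⟨d, hd⟩ : ∃ d, haarK j = haarK i + 1 + d := ⟨haarK j - haarK i - 1, by omega⟩
    rw [hkli, hklj, hd]
    exact diff_level _ _ _ _ hli (hd ▸ hlj)
  · have hll : haarL i ≠ haarL j := by
      intro h; exact hij (by rw [hkli, hklj, hk, h])
    rcases lt_or_gt_of_ne hll with hll' | hll'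
    · rw [hkli, hklj, ← hk]
      exact same_level _ _ _ hli (hk ▸ hlj) hll'
    · rw [integral_congr_ae (Eventually.of_forall (fun x => mul_comm (haar i x) (haar j x)))]
      rw [hkli, hklj, hk]
      exact same_level _ _ _ hlj (hk ▸ hli) hll'
  · rw [integral_congr_ae (Eventually.of_forall (fun x => mul_comm (haar i x) (haar j x)))]
    obtain ⟨d, hd⟩ : ∃ d, haarK i = haarK j + 1 + d := ⟨haarK i - haarK j - 1, by omega⟩
    rw [hkli, hklj, hd]
    exact diff_level _ _ _ _ hlj (hd ▸ hli)

/-! ## Coefficients of primitives -/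

lemma pa_mem (k l : ℕ) (hl : l < 2 ^ k) : pa k l ∈ Icc (0:ℝ) 1 :=
  ⟨pa_nonneg k l, ((pa_lt_pm k l).trans (pm_lt_pb k l)).le.trans (pb_le_one k l hl)⟩

lemma pm_mem (k l : ℕ) (hl : l < 2 ^ k) : pm k l ∈ Icc (0:ℝ) 1 :=
  ⟨(pa_nonneg k l).trans (pa_lt_pm k l).le, (pm_lt_pb k l).le.trans (pb_le_one k l hl)⟩

lemma pb_mem (k l : ℕ) (hl : l < 2 ^ k) : pb k l ∈ Icc (0:ℝ) 1 :=
  ⟨(pa_nonneg k l).trans ((pa_lt_pm k l).trans (pm_lt_pb k l)).le, pb_le_one k l hl⟩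

lemma intervalIntegrable_of_subset {u : ℝ → ℝ} (hu : IntegrableOn u (Icc 0 1) volume)
    {c d : ℝ} (hc : 0 ≤ c) (hcd : c ≤ d) (hd : d ≤ 1) : IntervalIntegrable u volume c d :=
  (hu.mono_set (by rw [uIcc_of_le hcd]; exact Icc_subset_Icc hc hd)).intervalIntegrable

lemma integral_ind_mul {u : ℝ → ℝ} {S : Set ℝ} (hS : MeasurableSet S) (hsub : S ⊆ Icc 0 1) :
    ∫ x, S.indicator u x ∂mu01 = ∫ x in S, u x ∂volume := by
  unfold mu01
  rw [setIntegral_indicator hS, inter_eq_right.mpr hsub]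

lemma haarCoeff_primitive {u : ℝ → ℝ} (hu : IntegrableOn u (Icc 0 1) volume)
    {G : ℝ → ℝ} (hrep : ∀ t ∈ Icc (0:ℝ) 1, G t = ∫ s in (0:ℝ)..t, u s) (n : ℕ) :
    haarCoeff G n = ∫ x, u x * haar n x ∂mu01 := by
  rcases eq_or_ne n 0 with rfl | hn
  · simp only [haarCoeff, if_pos rfl, haar_zero_apply, mul_one]
    rw [hrep 1 (by norm_num), hrep 0 (by norm_num), intervalIntegral.integral_same, sub_zero,
      intervalIntegral.integral_of_le zero_le_one]
    show _ = ∫ x, u x ∂mu01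
    unfold mu01
    exact (setIntegral_congr_set Ioc_ae_eq_Icc)
  · obtain ⟨hl, hkl⟩ := exists_kl n hn
    rw [hkl]
    set k := haarK n with hkdef
    set l := haarL n with hldef
    have key : ∀ x, u x * haar (2 ^ k + l) x
        = hh k * (Ico (pa k l) (pm k l)).indicator u x
          - hh k * (Icc (pm k l) (pb k l)).indicator u x := by
      intro x
      rw [haar_eq_ind k l hl]
      simp only [Set.indicator_apply, Pi.one_apply]
      split_ifs <;> ring
    rw [integral_congr_ae (Eventually.of_forall key)]
    have hi1 : Integrable ((Ico (pa k l) (pm k l)).indicator u) mu01 :=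
      Integrable.indicator hu measurableSet_Ico
    have hi2 : Integrable ((Icc (pm k l) (pb k l)).indicator u) mu01 :=
      Integrable.indicator hu measurableSet_Icc
    have hsub1 : Ico (pa k l) (pm k l) ⊆ Icc (0:ℝ) 1 := fun x hx =>
      ⟨(pa_mem k l hl).1.trans hx.1, hx.2.le.trans ((pm_mem k l hl).2)⟩
    have hsub2 : Icc (pm k l) (pb k l) ⊆ Icc (0:ℝ) 1 := fun x hx =>
      ⟨(pm_mem k l hl).1.trans hx.1, hx.2.trans ((pb_mem k l hl).2)⟩
    rw [integral_sub (hi1.const_mul _) (hi2.const_mul _), integral_const_mul, integral_const_mul,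
      integral_ind_mul measurableSet_Ico hsub1, integral_ind_mul measurableSet_Icc hsub2,
      setIntegral_congr_set Ico_ae_eq_Ioc, setIntegral_congr_set Ioc_ae_eq_Icc.symm]
    -- now the left side
    rw [haarCoeff_apply G k l hl, hrep _ (pm_mem k l hl), hrep _ (pb_mem k l hl),
      hrep _ (pa_mem k l hl)]
    have h1 : IntervalIntegrable u volume 0 (pa k l) :=
      intervalIntegrable_of_subset hu le_rfl (pa_mem k l hl).1 (pa_mem k l hl).2
    have h2 : IntervalIntegrable u volume 0 (pm k l) :=
      intervalIntegrable_of_subset hu le_rfl (pm_mem k l hl).1 (pm_mem k l hl).2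
    have h3 : IntervalIntegrable u volume 0 (pb k l) :=
      intervalIntegrable_of_subset hu le_rfl (pb_mem k l hl).1 (pb_mem k l hl).2
    have e1 : (∫ s in (0:ℝ)..(pm k l), u s) - ∫ s in (0:ℝ)..(pa k l), u s
        = ∫ s in Ioc (pa k l) (pm k l), u s := by
      rw [intervalIntegral.integral_interval_sub_left h2 h1,
        intervalIntegral.integral_of_le (pa_lt_pm k l).le]
    have e2 : (∫ s in (0:ℝ)..(pb k l), u s) - ∫ s in (0:ℝ)..(pm k l), u s
        = ∫ s in Ioc (pm k l) (pb k l), u s := by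
      rw [intervalIntegral.integral_interval_sub_left h3 h2,
        intervalIntegral.integral_of_le (pm_lt_pb k l).le]
    rw [smul_eq_mul, smul_eq_mul, ← e1, ← e2]
    ring

/-! ## Dyadic vanishing -/

lemma vanish_dyadic {F : ℝ → ℝ} (h0 : F 0 = 0) (hc : ∀ n, haarCoeff F n = 0) :
    ∀ k : ℕ, ∀ j : ℕ, j ≤ 2 ^ k → F ((j : ℝ) / 2 ^ k) = 0 := by
  intro k
  induction k with
  | zero =>
    intro j hj
    interval_cases j
    · simpa using h0
    · have h := hc 0
      simp only [haarCoeff, if_pos rfl, h0, sub_zero] at h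
      simpa using h
  | succ k ih =>
    intro j hj
    rcases Nat.even_or_odd j with ⟨i, hi⟩ | ⟨l, hlj⟩
    · subst hi
      have hi2 : i ≤ 2 ^ k := by rw [pow_succ] at hj; omega
      have hcast : ((i + i : ℕ) : ℝ) / 2 ^ (k + 1) = (i : ℝ) / 2 ^ k := by
        push_cast
        rw [pow_succ]
        rw [div_eq_div_iff (by positivity) (by positivity)]
        ring
      rw [hcast]
      exact ih i hi2
    · subst hlj
      have hl : l < 2 ^ k := by rw [pow_succ] at hj; omega
      have h := hc (2 ^ k + l)
      rw [haarCoeff_apply F k l hl] at h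
      have hFa : F (pa k l) = 0 := by
        have e : pa k l = (l : ℝ) / 2 ^ k := by
          unfold pa
          rw [pow_succ, div_eq_div_iff (by positivity) (by positivity)]
          ring
        rw [e]; exact ih l hl.le
      have hFb : F (pb k l) = 0 := by
        have e : pb k l = ((l + 1 : ℕ) : ℝ) / 2 ^ k := by
          unfold pb
          rw [pow_succ, div_eq_div_iff (by positivity) (by positivity)]
          push_cast
          ring
        rw [e]; exact ih (l + 1) hl
      rw [hFa, hFb, smul_eq_mul, smul_eq_mul] at h
      have hmid : F (pm k l) = 0 := by
        rcases mul_eq_zero.mp h with h' | h'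
        · exact absurd h' (hh_pos k).ne'
        · linarith
      have e : ((2 * l + 1 : ℕ) : ℝ) / 2 ^ (k + 1) = pm k l := by
        unfold pm; push_cast; ring
      rw [e]
      exact hmid

/-- Density of dyadics plus continuity. -/
lemma eq_zero_on_Icc {F : ℝ → ℝ} (hcont : ContinuousOn F (Icc 0 1)) (h0 : F 0 = 0)
    (hc : ∀ n, haarCoeff F n = 0) : ∀ t ∈ Icc (0:ℝ) 1, F t = 0 := by
  have hd := vanish_dyadic h0 hc
  intro t ht
  set x : ℕ → ℝ := fun k => (⌊t * 2 ^ k⌋₊ : ℝ) / 2 ^ k with hx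
  have hfloor_le : ∀ k : ℕ, (⌊t * 2 ^ k⌋₊ : ℝ) ≤ t * 2 ^ k := fun k =>
    Nat.floor_le (mul_nonneg ht.1 (by positivity))
  have hxk : ∀ k, ⌊t * 2 ^ k⌋₊ ≤ 2 ^ k := by
    intro k
    have h1 : t * 2 ^ k ≤ ((2 ^ k : ℕ) : ℝ) := by
      push_cast
      nlinarith [ht.2, (by positivity : (0:ℝ) < 2 ^ k)]
    calc ⌊t * 2 ^ k⌋₊ ≤ ⌊((2 ^ k : ℕ) : ℝ)⌋₊ := Nat.floor_mono h1
      _ = 2 ^ k := Nat.floor_natCast _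
  have hzero : ∀ k, F (x k) = 0 := fun k => hd k _ (hxk k)
  have hmem : ∀ k, x k ∈ Icc (0:ℝ) 1 := by
    intro k
    constructor
    · positivity
    · rw [div_le_one (by positivity)]
      calc ((⌊t * 2 ^ k⌋₊ : ℕ) : ℝ) ≤ ((2 ^ k : ℕ) : ℝ) := Nat.cast_le.mpr (hxk k)
        _ = 2 ^ k := by push_cast; ring
  have hlim : Tendsto x atTop (𝓝 t) := by
    have hub : ∀ k, ‖x k - t‖ ≤ (1/2 : ℝ) ^ k := by
      intro k
      have h2k : (0:ℝ) < 2 ^ k := by positivity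
      have hupp : t * 2 ^ k < (⌊t * 2 ^ k⌋₊ : ℝ) + 1 := Nat.lt_floor_add_one _
      have hle : x k ≤ t := by
        rw [hx]
        simp only
        rw [div_le_iff₀ h2k]
        exact hfloor_le k
      have hge : t - x k ≤ (1/2 : ℝ) ^ k := by
        have hpow : (1/2 : ℝ) ^ k = 1 / 2 ^ k := by rw [div_pow, one_pow]
        rw [hx, hpow]
        simp only
        rw [sub_le_iff_le_add, ← add_div, le_div_iff₀ h2k]
        linarith
      rw [Real.norm_eq_abs, abs_sub_comm, abs_of_nonneg (by linarith)]
      exact hge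
    have h12 : Tendsto (fun k : ℕ => (1/2 : ℝ) ^ k) atTop (𝓝 0) :=
      tendsto_pow_atTop_nhds_zero_of_lt_one (by norm_num) (by norm_num)
    have : Tendsto (fun k => x k - t) atTop (𝓝 0) := squeeze_zero_norm hub h12
    have h2 := this.add_const t
    simpa using h2
  have hcomp : Tendsto (fun k => F (x k)) atTop (𝓝 (F t)) :=
    (hcont t ht).tendsto.comp
      (tendsto_nhdsWithin_of_tendsto_nhds_of_eventually_within x hlim
        (Eventually.of_forall hmem))
  have hconst : Tendsto (fun k => F (x k)) atTop (𝓝 (0:ℝ)) := by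
    simp only [hzero]
    exact tendsto_const_nhds
  exact tendsto_nhds_unique hcomp hconst

/-! ## All set integrals vanish -/

lemma setIntegral_zero_of_primitive {u : ℝ → ℝ} (hu : Integrable u mu01)
    (h : ∀ t ∈ Icc (0:ℝ) 1, (∫ s in (0:ℝ)..t, u s) = 0) :
    ∀ ⦃s : Set ℝ⦄, MeasurableSet s → ∫ x in s, u x ∂mu01 = 0 := by
  have hu' : IntegrableOn u (Icc 0 1) volume := hu
  have hIoc : ∀ c d : ℝ, 0 ≤ c → c ≤ d → d ≤ 1 → ∫ x in Ioc c d, u x ∂volume = 0 := by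
    intro c d h0 hcd h1
    have hic : IntervalIntegrable u volume 0 c :=
      intervalIntegrable_of_subset hu' le_rfl h0 (hcd.trans h1)
    have hid : IntervalIntegrable u volume 0 d :=
      intervalIntegrable_of_subset hu' le_rfl (h0.trans hcd) h1
    rw [← intervalIntegral.integral_of_le hcd,
      ← intervalIntegral.integral_interval_sub_left hid hic,
      h d ⟨h0.trans hcd, h1⟩, h c ⟨h0, hcd.trans h1⟩, sub_zero]
  have htot : ∫ x, u x ∂mu01 = 0 := by
    show ∫ x in Icc (0:ℝ) 1, u x ∂volume = 0
    rw [← setIntegral_congr_set Ioc_ae_eq_Icc]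
    exact hIoc 0 1 le_rfl zero_le_one le_rfl
  have h_eq : (inferInstance : MeasurableSpace ℝ)
      = .generateFrom { S : Set ℝ | ∃ l u, l < u ∧ Ioc l u = S } := by
    rw [BorelSpace.measurable_eq (α := ℝ), borel_eq_generateFrom_Ioc ℝ]
  have hpi : IsPiSystem { S : Set ℝ | ∃ l u, l < u ∧ Ioc l u = S } := by
    have := isPiSystem_Ioc (id : ℝ → ℝ) (id : ℝ → ℝ)
    simpa using this
  refine MeasurableSpace.induction_on_inter h_eq hpi (by simp) ?_ ?_ ?_
  · rintro S ⟨c, d, hcd, rfl⟩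
    unfold mu01
    rw [Measure.restrict_restrict measurableSet_Ioc,
      setIntegral_congr_set ((EventuallyEq.refl _ _).inter Ioc_ae_eq_Icc.symm),
      Set.Ioc_inter_Ioc]
    rcases le_or_gt (d ⊓ 1) (c ⊔ 0) with hle | hlt
    · rw [Set.Ioc_eq_empty (not_lt.mpr hle)]
      simp
    · exact hIoc _ _ le_sup_right hlt.le inf_le_right
  · intro t ht hC
    have hadd := integral_add_compl ht hu
    rw [htot] at hadd
    linarith [hadd, hC]
  · intro g hdisj hmeas hCi
    rw [integral_iUnion hmeas hdisj hu.integrableOn]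
    simp [hCi]

/-! ## Hölder implies continuity -/

lemma continuousOn_of_memHolder {a : ℝ} (ha : 0 < a) {F : ℝ → ℝ} (hF : MemHolder a F) :
    ContinuousOn F (Icc 0 1) := by
  obtain ⟨C, hC⟩ := hF
  intro t ht
  have h1 : Tendsto (fun s : ℝ => |s - t|) (𝓝[Icc (0:ℝ) 1] t) (𝓝 0) := by
    have hcont : Continuous (fun s : ℝ => |s - t|) :=
      continuous_abs.comp (continuous_id.sub continuous_const)
    have h := (hcont.tendsto t).mono_left (nhdsWithin_le_nhds (s := Icc (0:ℝ) 1))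
    simpa using h
  have h2 : Tendsto (fun s : ℝ => |s - t| ^ a) (𝓝[Icc (0:ℝ) 1] t) (𝓝 ((0:ℝ) ^ a)) :=
    ((Real.continuousAt_rpow_const 0 a (Or.inr ha.le)).tendsto).comp h1
  rw [Real.zero_rpow ha.ne'] at h2
  have hb : Tendsto (fun s : ℝ => C * |s - t| ^ a) (𝓝[Icc (0:ℝ) 1] t) (𝓝 0) := by
    simpa using h2.const_mul C
  have hsq : Tendsto (fun s => F s - F t) (𝓝[Icc (0:ℝ) 1] t) (𝓝 0) := by
    apply squeeze_zero_norm' ?_ hb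
    filter_upwards [self_mem_nhdsWithin] with s hs
    exact hC t ht s hs
  have hfin := hsq.add_const (F t)
  simp only [sub_add_cancel] at hfin
  rw [zero_add] at hfin
  exact hfin

/-! ## The Haar Hilbert basis of L²[0,1] -/

def eH (n : ℕ) : Lp ℝ 2 mu01 := (memL2_haar n).toLp (haar n)

lemma inner_eH (n : ℕ) (f : Lp ℝ 2 mu01) :
    (inner ℝ (eH n) f : ℝ) = ∫ x, haar n x * f x ∂mu01 := by
  rw [L2.inner_def]
  simp only [RCLike.inner_apply, conj_trivial]
  refine integral_congr_ae ?_
  filter_upwards [(memL2_haar n).coeFn_toLp] with x hx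
  rw [show eH n x = haar n x from hx, mul_comm]

lemma orthonormal_eH : Orthonormal ℝ eH := by
  rw [orthonormal_iff_ite]
  intro i j
  rw [inner_eH]
  have hcongr : ∫ x, haar i x * (eH j) x ∂mu01 = ∫ x, haar i x * haar j x ∂mu01 := by
    refine integral_congr_ae ?_
    filter_upwards [(memL2_haar j).coeFn_toLp] with x hx
    rw [show eH j x = haar j x from hx]
  rw [hcongr]
  split_ifs with h
  · subst h
    rcases eq_or_ne i 0 with rfl | hi
    · simp only [haar_zero_apply, mul_one]
      rw [integral_const, smul_eq_mul, mul_one]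
      show (mu01 univ).toReal = 1
      unfold mu01
      rw [Measure.restrict_apply_univ, Real.volume_Icc]
      norm_num
    · exact integral_haar_sq i hi
  · exact integral_haar_mul_zero i j h

lemma primitive_continuousOn {u : ℝ → ℝ} (hu : IntegrableOn u (Icc 0 1) volume) :
    ContinuousOn (fun t => ∫ s in (0:ℝ)..t, u s) (Icc 0 1) := by
  rw [show Icc (0:ℝ) 1 = uIcc (0:ℝ) 1 from (uIcc_of_le zero_le_one).symm]
  exact intervalIntegral.continuousOn_primitive_interval (by rw [uIcc_of_le zero_le_one]; exact hu)

lemma span_eH_orth_bot : (Submodule.span ℝ (Set.range eH))ᗮ = ⊥ := by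
  rw [Submodule.eq_bot_iff]
  intro f hf
  have h0 : ∀ n, (inner ℝ (eH n) f : ℝ) = 0 := fun n =>
    (Submodule.mem_orthogonal _ f).mp hf (eH n) (Submodule.subset_span ⟨n, rfl⟩)
  have hu2 : MemLp (⇑f) 2 mu01 := Lp.memLp f
  have hu1 : Integrable (⇑f) mu01 := hu2.integrable one_le_two
  have hcoef : ∀ n, haarCoeff (fun t => ∫ s in (0:ℝ)..t, f s) n = 0 := by
    intro n
    rw [haarCoeff_primitive hu1 (fun t _ => rfl) n]
    have h := h0 n
    rw [inner_eH] at h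
    rw [← h]
    exact integral_congr_ae (Eventually.of_forall fun x => mul_comm _ _)
  have hvan : ∀ t ∈ Icc (0:ℝ) 1, (∫ s in (0:ℝ)..t, f s) = 0 :=
    eq_zero_on_Icc (primitive_continuousOn hu1) (by simp) hcoef
  have hae : ⇑f =ᵐ[mu01] 0 :=
    ae_eq_zero_of_forall_setIntegral_eq_of_sigmaFinite
      (fun s _ _ => hu1.integrableOn)
      (fun s hs _ => setIntegral_zero_of_primitive hu1 hvan hs)
  exact Lp.eq_zero_iff_ae_eq_zero.mpr hae

def haarBasis : HilbertBasis ℕ ℝ (Lp ℝ 2 mu01) :=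
  HilbertBasis.mkOfOrthogonalEqBot orthonormal_eH span_eH_orth_bot

lemma haarBasis_coe : ⇑haarBasis = eH :=
  HilbertBasis.coe_mkOfOrthogonalEqBot _ _

/-- Parseval for the Haar basis. -/
lemma parseval (f : Lp ℝ 2 mu01) :
    HasSum (fun n => (inner ℝ (eH n) f : ℝ) ^ 2) (‖f‖ ^ 2) := by
  have h := haarBasis.hasSum_inner_mul_inner f f
  rw [haarBasis_coe] at h
  have heq : ∀ n, (inner ℝ f (eH n) : ℝ) * (inner ℝ (eH n) f : ℝ) = (inner ℝ (eH n) f : ℝ) ^ 2 := by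
    intro n
    rw [real_inner_comm f (eH n)]
    ring
  rw [real_inner_self_eq_norm_sq] at h
  simp only [heq] at h
  exact h
/-! ## Energy identity -/

lemma norm_sq_eq_integral (f : Lp ℝ 2 mu01) : ‖f‖ ^ 2 = ∫ x, (f x) ^ 2 ∂mu01 := by
  rw [← real_inner_self_eq_norm_sq, L2.inner_def]
  simp only [RCLike.inner_apply, conj_trivial]
  exact integral_congr_ae (Eventually.of_forall fun x => (pow_two (f x)).symm)

lemma haarCoeff_sub (X Y : ℝ → ℝ) (n : ℕ) :
    haarCoeff (fun t => X t - Y t) n = haarCoeff X n - haarCoeff Y n := by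
  unfold haarCoeff
  split_ifs
  · ring
  · simp only [smul_eq_mul]; ring

lemma energy_hasSum {G u : ℝ → ℝ} (hmeas : AEStronglyMeasurable u mu01)
    (hrep : ∀ t ∈ Icc (0:ℝ) 1, G t = ∫ s in (0:ℝ)..t, u s)
    (hfin : (∫⁻ s in Icc (0:ℝ) 1, ENNReal.ofReal (u s ^ 2)) ≠ ⊤) :
    HasSum (fun n => (haarCoeff G n) ^ 2) (∫ x, u x ^ 2 ∂mu01)
      ∧ (∫⁻ s in Icc (0:ℝ) 1, ENNReal.ofReal (u s ^ 2))
          = ENNReal.ofReal (∫ x, u x ^ 2 ∂mu01) := by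
  have hsqmeas : AEStronglyMeasurable (fun x => u x ^ 2) mu01 := by
    have e : (fun x => u x ^ 2) = fun x => u x * u x := funext fun x => pow_two (u x)
    rw [e]
    exact hmeas.mul hmeas
  have hnorm : ∀ x : ℝ, ‖u x ^ 2‖ₑ = ENNReal.ofReal (u x ^ 2) := fun x =>
    (Real.enorm_eq_ofReal (sq_nonneg (u x)))
  have hsqint : Integrable (fun x => u x ^ 2) mu01 := by
    refine ⟨hsqmeas, ?_⟩
    unfold HasFiniteIntegral
    rw [lintegral_congr hnorm]
    exact lt_top_iff_ne_top.mpr hfin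
  have hu2 : MemLp u 2 mu01 := (memLp_two_iff_integrable_sq hmeas).mpr hsqint
  have hu1 : IntegrableOn u (Icc 0 1) volume := hu2.integrable one_le_two
  set f : Lp ℝ 2 mu01 := hu2.toLp u with hf
  have hcoe : ⇑f =ᵐ[mu01] u := hu2.coeFn_toLp
  have hinner : ∀ n, (inner ℝ (eH n) f : ℝ) = haarCoeff G n := by
    intro n
    rw [inner_eH, haarCoeff_primitive hu1 hrep n]
    refine integral_congr_ae ?_
    filter_upwards [hcoe] with x hx
    rw [hx, mul_comm]
  have hnormf : ‖f‖ ^ 2 = ∫ x, u x ^ 2 ∂mu01 := by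
    rw [norm_sq_eq_integral]
    refine integral_congr_ae ?_
    filter_upwards [hcoe] with x hx
    rw [hx]
  constructor
  · have h := parseval f
    simp only [hinner, hnormf] at h
    exact h
  · rw [ofReal_integral_eq_lintegral_ofReal hsqint
      (Eventually.of_forall fun x => sq_nonneg (u x))]
    exact lintegral_congr hnorm |>.symm ▸ rfl

/-- Value computation for any admissible representation with finite energy. -/
lemma value_eq {G u : ℝ → ℝ} (hmeas : AEStronglyMeasurable u mu01)
    (hrep : ∀ t ∈ Icc (0:ℝ) 1, G t = ∫ s in (0:ℝ)..t, u s)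
    (hfin : (∫⁻ s in Icc (0:ℝ) 1, ENNReal.ofReal (u s ^ 2)) ≠ ⊤) :
    Summable (fun n => (haarCoeff G n) ^ 2)
      ∧ (1/2 : ℝ≥0∞) * (∫⁻ s in Icc (0:ℝ) 1, ENNReal.ofReal (u s ^ 2))
          = ENNReal.ofReal (∑' n, (haarCoeff G n) ^ 2 / 2) := by
  obtain ⟨hs, hl⟩ := energy_hasSum hmeas hrep hfin
  refine ⟨hs.summable, ?_⟩
  rw [hl, tsum_div_const, hs.tsum_eq, ENNReal.ofReal_div_of_pos two_pos]
  rw [show ENNReal.ofReal (2:ℝ) = 2 from by norm_num]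
  rw [one_div, div_eq_mul_inv, mul_comm]

/-- **The scalar rate function in Schauder coordinates**with Schauder coefficients `G_n = c_n(α) ∫_{[0,1]} χ_n dG`, one has `Ĩ(G) < ∞` iff
`Σ_n G_n²/c_n(α)² < ∞`, and in that case `Ĩ(G) = Σ_n G_n²/(2 c_n(α)²)`. -/
theorem rateI1_eq_schauder_coords
    (α : ℝ) (hα : α ∈ Ioo (0:ℝ) (1/2))
    (G : ℝ → ℝ) (hG : MemHolder0 α G) :
    (rateI1 G < ⊤ ↔
      Summable (fun n => (cCoef α n * haarCoeff G n) ^ 2 / (cCoef α n) ^ 2)) ∧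
    (Summable (fun n => (cCoef α n * haarCoeff G n) ^ 2 / (cCoef α n) ^ 2) →
      rateI1 G
        = ENNReal.ofReal (∑' n, (cCoef α n * haarCoeff G n) ^ 2 / (2 * (cCoef α n) ^ 2))) := by
  obtain ⟨hG0, hGho, -⟩ := hG
  have hGcont : ContinuousOn G (Icc 0 1) := continuousOn_of_memHolder hα.1 hGho
  have hcne : ∀ n, cCoef α n ≠ 0 := by
    intro n; unfold cCoef; split_ifs
    · exact one_ne_zero
    · exact (Real.rpow_pos_of_pos two_pos _).ne'
  have e1 : ∀ n, (cCoef α n * haarCoeff G n) ^ 2 / (cCoef α n) ^ 2 = (haarCoeff G n) ^ 2 := by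
    intro n; have := hcne n; field_simp
  have e2 : ∀ n, (cCoef α n * haarCoeff G n) ^ 2 / (2 * (cCoef α n) ^ 2)
      = (haarCoeff G n) ^ 2 / 2 := by
    intro n; have := hcne n; field_simp
  simp only [e1, e2]
  have step2 : Summable (fun n => (haarCoeff G n) ^ 2) →
      rateI1 G = ENNReal.ofReal (∑' n, (haarCoeff G n) ^ 2 / 2) := by
    intro hsum
    have hmem : Memℓp (fun n => haarCoeff G n) 2 := by
      apply memℓp_gen
      have e : ∀ n : ℕ, ‖haarCoeff G n‖ ^ (2 : ℝ≥0∞).toReal = (haarCoeff G n) ^ 2 := by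
        intro n
        rw [ENNReal.toReal_ofNat, show ((2:ℝ)) = ((2:ℕ):ℝ) by norm_num, Real.rpow_natCast,
          Real.norm_eq_abs, sq_abs]
      exact (summable_congr e).mpr hsum
    set f : Lp ℝ 2 mu01 := haarBasis.repr.symm ⟨fun n => haarCoeff G n, hmem⟩ with hfdef
    have hcoefs : ∀ n, (inner ℝ (eH n) f : ℝ) = haarCoeff G n := by
      intro n
      rw [show eH n = haarBasis n from (congrFun haarBasis_coe n).symm,
        ← haarBasis.repr_apply_apply f n, hfdef, LinearIsometryEquiv.apply_symm_apply]
    have hu2 : MemLp (⇑f) 2 mu01 := Lp.memLp f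
    have hu1 : IntegrableOn (⇑f) (Icc 0 1) volume := hu2.integrable one_le_two
    have hFcoef : ∀ n, haarCoeff (fun t => ∫ s in (0:ℝ)..t, f s) n = haarCoeff G n := by
      intro n
      rw [haarCoeff_primitive hu1 (fun t _ => rfl) n, ← hcoefs n, inner_eH]
      exact (integral_congr_ae (Eventually.of_forall fun x => mul_comm _ _)).symm
    have hDcoef : ∀ n, haarCoeff (fun t => G t - ∫ s in (0:ℝ)..t, f s) n = 0 := by
      intro n; rw [haarCoeff_sub, hFcoef, sub_self]
    have hD0 : (fun t => G t - ∫ s in (0:ℝ)..t, f s) 0 = 0 := by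
      simp [hG0]
    have hDvan := eq_zero_on_Icc (hGcont.sub (primitive_continuousOn hu1)) hD0 hDcoef
    have hrep : ∀ t ∈ Icc (0:ℝ) 1, G t = ∫ s in (0:ℝ)..t, f s := fun t ht =>
      sub_eq_zero.mp (hDvan t ht)
    have hfin : (∫⁻ s in Icc (0:ℝ) 1, ENNReal.ofReal (f s ^ 2)) ≠ ⊤ := by
      have hsqint : Integrable (fun x => (f x) ^ 2) mu01 := hu2.integrable_sq
      have h := ofReal_integral_eq_lintegral_ofReal hsqint
        (Eventually.of_forall fun x => sq_nonneg _)
      rw [show (∫⁻ s in Icc (0:ℝ) 1, ENNReal.ofReal (f s ^ 2))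
          = ∫⁻ s, ENNReal.ofReal (f s ^ 2) ∂mu01 from rfl, ← h]
      exact ENNReal.ofReal_ne_top
    obtain ⟨-, hval⟩ := value_eq (Lp.aestronglyMeasurable f) hrep hfin
    refine le_antisymm ?_ ?_
    · refine iInf_le_of_le (⇑f) (iInf_le_of_le (Lp.aestronglyMeasurable f)
        (iInf_le_of_le hrep ?_))
      exact le_of_eq hval
    · refine le_iInf fun u => le_iInf fun hm => le_iInf fun hrep' => ?_
      rcases eq_or_ne (∫⁻ s in Icc (0:ℝ) 1, ENNReal.ofReal (u s ^ 2)) ⊤ with htop | hne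
      · rw [htop, ENNReal.mul_top (by norm_num)]
        exact le_top
      · exact le_of_eq (value_eq hm hrep' hne).2.symm
  constructor
  · constructor
    · intro hlt
      unfold rateI1 at hlt
      obtain ⟨u, hu⟩ := iInf_lt_iff.mp hlt
      obtain ⟨hm, hu2'⟩ := iInf_lt_iff.mp hu
      obtain ⟨hrep', hval⟩ := iInf_lt_iff.mp hu2'
      have hne : (∫⁻ s in Icc (0:ℝ) 1, ENNReal.ofReal (u s ^ 2)) ≠ ⊤ := by
        intro h
        rw [h, ENNReal.mul_top (by norm_num)] at hval
        exact absurd hval (lt_irrefl ⊤)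
      exact (value_eq hm hrep' hne).1
    · intro hsum
      rw [step2 hsum]
      exact ENNReal.ofReal_lt_top
  · exact step2

end SchilderHilbert
end
end

section
/- Let 0 < α < 1/2, δ > 0, and let (λ_k)_{k≥0} be a summable sequence of positive reals. With c_0(α) = 1 and c_n(α) = 2^{k(α−1/2)+α−1} for n = 2^k + l, 0 ≤ l ≤ 2^k − 1, one has lim_{ε→0⁺} Σ_{k=0}^∞ Σ_{n=0}^∞ exp( −δ² / (8 c_n(α)² ε λ_k) ) = 0. -/
open MeasureTheory Filter Set Topology
open scoped ENNReal NNReal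

noncomputable section

namespace SchilderHilbert

lemma cCoef_pos' (α : ℝ) (n : ℕ) : 0 < cCoef α n := by
  unfold cCoef; split
  · exact one_pos
  · exact Real.rpow_pos_of_pos two_pos _

lemma summable_cCoef_pow (α : ℝ) (m : ℕ) (hr : 1 < (m : ℝ) * (1/2 - α)) :
    Summable (fun n => cCoef α n ^ m) := by
  set r : ℝ := (m : ℝ) * (1/2 - α) with hrdef
  have hC : (0:ℝ) < (2:ℝ) ^ ((m:ℝ)*(α-1)+r) := Real.rpow_pos_of_pos two_pos _
  have hsum1 : Summable (fun n : ℕ => ((n:ℝ)) ^ (-r)) :=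
    Real.summable_nat_rpow.mpr (by linarith)
  have hsum2 : Summable (fun n : ℕ => (((n+1:ℕ)):ℝ) ^ (-r)) :=
    (summable_nat_add_iff 1).mpr hsum1
  rw [← summable_nat_add_iff 1]
  apply Summable.of_nonneg_of_le (fun n => pow_nonneg (cCoef_pos' α _).le _)
    (fun n => ?_) (hsum2.mul_left ((2:ℝ) ^ ((m:ℝ)*(α-1)+r)))
  -- key bound for n+1 ≥ 1
  set n' : ℕ := n + 1 with hn'
  have hn0 : n' ≠ 0 := Nat.succ_ne_zero n
  set k : ℕ := Nat.log 2 n' with hk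
  have h1 : cCoef α n' ^ m = (2:ℝ) ^ ((((k:ℝ))*(α-1/2)+α-1) * (m:ℝ)) := by
    rw [cCoef, if_neg hn0, ← Real.rpow_natCast ((2:ℝ) ^ _) m,
      ← Real.rpow_mul (by norm_num : (0:ℝ) ≤ 2)]; rfl
  have h2 : (n':ℝ) ≤ (2:ℝ) ^ (((k+1:ℕ)):ℝ) := by
    rw [Real.rpow_natCast]
    exact_mod_cast (Nat.lt_pow_succ_log_self (by norm_num) n').le
  have h3 : ((2:ℝ) ^ (((k+1:ℕ)):ℝ)) ^ (-r) ≤ (n':ℝ) ^ (-r) :=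
    Real.rpow_le_rpow_of_nonpos (by positivity) h2 (by linarith)
  have h4 : ((2:ℝ) ^ (((k+1:ℕ)):ℝ)) ^ (-r) = (2:ℝ) ^ ((((k+1:ℕ)):ℝ) * (-r)) := by
    rw [← Real.rpow_mul (by norm_num : (0:ℝ) ≤ 2)]
  calc cCoef α n' ^ m = (2:ℝ) ^ ((((k:ℝ))*(α-1/2)+α-1) * (m:ℝ)) := h1
    _ = (2:ℝ) ^ ((m:ℝ)*(α-1)+r) * (2:ℝ) ^ ((((k+1:ℕ)):ℝ) * (-r)) := by
        rw [← Real.rpow_add two_pos]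
        congr 1
        rw [hrdef]; push_cast; ring
    _ = (2:ℝ) ^ ((m:ℝ)*(α-1)+r) * ((2:ℝ) ^ (((k+1:ℕ)):ℝ)) ^ (-r) := by rw [h4]
    _ ≤ (2:ℝ) ^ ((m:ℝ)*(α-1)+r) * (n':ℝ) ^ (-r) := by
        exact mul_le_mul_of_nonneg_left h3 hC.le

lemma summable_lam_pow {lam : ℕ → ℝ} (hlam : ∀ k, 0 < lam k) (hsum : Summable lam)
    (m : ℕ) : Summable (fun k => lam k ^ (m + 1)) := by
  have hT : ∀ k, lam k ≤ ∑' j, lam j := fun k => hsum.le_tsum k (fun j _ => (hlam j).le)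
  have hTnn : (0:ℝ) ≤ ∑' j, lam j := tsum_nonneg fun j => (hlam j).le
  apply Summable.of_nonneg_of_le (fun k => pow_nonneg (hlam k).le _)
    (fun k => ?_) (hsum.mul_left ((∑' j, lam j) ^ m))
  calc lam k ^ (m+1) = lam k ^ m * lam k := by ring
    _ ≤ (∑' j, lam j) ^ m * lam k :=
        mul_le_mul_of_nonneg_right (pow_le_pow_left₀ (hlam k).le (hT k) m) (hlam k).le

lemma exp_neg_le (u : ℝ) (hu : 0 < u) (p : ℕ) :
    Real.exp (-u) ≤ (p.factorial : ℝ) / u ^ p := by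
  have h1 : u ^ p / (p.factorial : ℝ) ≤ Real.exp u := Real.pow_div_factorial_le_exp u hu.le p
  have h2 : (0:ℝ) < u ^ p / (p.factorial : ℝ) := by positivity
  rw [Real.exp_neg]
  calc (Real.exp u)⁻¹ ≤ (u ^ p / (p.factorial : ℝ))⁻¹ := by
        exact inv_anti₀ h2 h1
    _ = (p.factorial : ℝ) / u ^ p := by rw [inv_div]


/-- **Vanishing of the double exponential series** (step 2 of Lemma 10): for
`0 < α < 1/2`, `δ > 0` and summable positive `(λ_k)`,
`lim_{ε→0⁺} Σ_k Σ_n exp(-δ²/(8 c_n(α)² ε λ_k)) = 0`. -/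
theorem tendsto_double_exp_sum
    (α : ℝ) (hα : α ∈ Ioo (0:ℝ) (1/2)) (δ : ℝ) (hδ : 0 < δ)
    (lam : ℕ → ℝ) (hlam : ∀ k, 0 < lam k) (hsum : Summable lam) :
    Tendsto
      (fun ε : ℝ => ∑' k : ℕ, ∑' n : ℕ,
        Real.exp (-(δ ^ 2) / (8 * (cCoef α n) ^ 2 * ε * lam k)))
      (𝓝[>] (0:ℝ)) (𝓝 0) := by
  obtain ⟨hα0, hα2⟩ := hα
  have h2α : (0:ℝ) < 1 - 2*α := by linarith
  set q : ℕ := ⌈(1 - 2*α)⁻¹⌉₊ with hq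
  set p : ℕ := q + 1 with hp
  have hp0 : p ≠ 0 := Nat.succ_ne_zero q
  have hpgt : (1 - 2*α)⁻¹ < (p:ℝ) := by
    have h := Nat.le_ceil (1 - 2*α)⁻¹
    rw [hp]; push_cast; linarith
  have hpr : 1 < (p:ℝ) * (1 - 2*α) := by
    have h1 : (1 - 2*α)⁻¹ * (1 - 2*α) = 1 := inv_mul_cancel₀ h2α.ne'
    nlinarith
  have hr : 1 < ((2*p : ℕ):ℝ) * (1/2 - α) := by
    have h2 := hpr; rw [hp] at h2; push_cast at h2 ⊢; nlinarith
  have hA : Summable (fun n => cCoef α n ^ (2*p)) := summable_cCoef_pow α (2*p) hr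
  set A : ℝ := ∑' n, cCoef α n ^ (2*p) with hAdef
  have hB : Summable (fun k => lam k ^ p) := by rw [hp]; exact summable_lam_pow hlam hsum q
  set B : ℝ := ∑' k, lam k ^ p with hBdef
  set D : ℝ := (p.factorial : ℝ) * (8 / δ^2) ^ p with hD
  have key : ∀ ε > (0:ℝ), ∀ k n : ℕ,
      Real.exp (-(δ^2) / (8 * (cCoef α n)^2 * ε * lam k))
        ≤ (D * ε^p * lam k ^ p) * cCoef α n ^ (2*p) := by
    intro ε hε k n
    have hc := cCoef_pos' α n
    have hl := hlam k
    have hX : (0:ℝ) < 8 * (cCoef α n)^2 * ε * lam k :=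
      mul_pos (mul_pos (mul_pos (by norm_num) (pow_pos hc 2)) hε) hl
    have hupos : 0 < δ^2 / (8 * (cCoef α n)^2 * ε * lam k) := div_pos (pow_pos hδ 2) hX
    have h1 : -(δ^2) / (8 * (cCoef α n)^2 * ε * lam k)
        = -(δ^2 / (8 * (cCoef α n)^2 * ε * lam k)) := by ring
    rw [h1]
    refine (exp_neg_le _ hupos p).trans_eq ?_
    rw [hD]
    rw [div_pow, div_pow, mul_pow, mul_pow, mul_pow, ← pow_mul, ← pow_mul]
    field_simp
  have hbound : ∀ ε > (0:ℝ),
      (∑' k : ℕ, ∑' n : ℕ, Real.exp (-(δ^2) / (8 * (cCoef α n)^2 * ε * lam k)))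
        ≤ D * ε^p * B * A := by
    intro ε hε
    have hsn : ∀ k : ℕ, Summable (fun n : ℕ =>
        Real.exp (-(δ^2) / (8 * (cCoef α n)^2 * ε * lam k))) := fun k =>
      Summable.of_nonneg_of_le (fun n => (Real.exp_pos _).le) (key ε hε k)
        (hA.mul_left _)
    have hinner : ∀ k : ℕ,
        (∑' n : ℕ, Real.exp (-(δ^2) / (8 * (cCoef α n)^2 * ε * lam k)))
          ≤ (D * ε^p * lam k ^ p) * A := by
      intro k
      calc (∑' n : ℕ, Real.exp (-(δ^2) / (8 * (cCoef α n)^2 * ε * lam k)))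
          ≤ ∑' n : ℕ, (D * ε^p * lam k ^ p) * cCoef α n ^ (2*p) :=
            Summable.tsum_le_tsum (key ε hε k) (hsn k) (hA.mul_left _)
        _ = (D * ε^p * lam k ^ p) * A := tsum_mul_left
    have hsumbd : Summable (fun k : ℕ => (D * ε^p * lam k ^ p) * A) :=
      (hB.mul_left (D * ε^p)).mul_right A
    have hsk : Summable (fun k : ℕ =>
        ∑' n : ℕ, Real.exp (-(δ^2) / (8 * (cCoef α n)^2 * ε * lam k))) :=
      Summable.of_nonneg_of_le
        (fun k => tsum_nonneg fun n => (Real.exp_pos _).le) hinner hsumbd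
    calc (∑' k : ℕ, ∑' n : ℕ, Real.exp (-(δ^2) / (8 * (cCoef α n)^2 * ε * lam k)))
        ≤ ∑' k : ℕ, (D * ε^p * lam k ^ p) * A := Summable.tsum_le_tsum hinner hsk hsumbd
      _ = D * ε^p * B * A := by rw [tsum_mul_right, tsum_mul_left]
  have hupper : Tendsto (fun ε : ℝ => D * ε^p * B * A) (𝓝[>] (0:ℝ)) (𝓝 0) := by
    have hcont : Tendsto (fun ε : ℝ => D * ε^p * B * A) (𝓝 0) (𝓝 (D * 0^p * B * A)) := by
      exact (((continuous_const.mul (continuous_pow p)).mul continuous_const).mul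
        continuous_const).tendsto 0
    have : D * 0^p * B * A = 0 := by rw [zero_pow hp0]; ring
    rw [this] at hcont
    exact hcont.mono_left nhdsWithin_le_nhds
  refine tendsto_of_tendsto_of_tendsto_of_le_of_le' tendsto_const_nhds hupper ?_ ?_
  · filter_upwards [self_mem_nhdsWithin] with ε hε
    exact tsum_nonneg fun k => tsum_nonneg fun n => (Real.exp_pos _).le
  · filter_upwards [self_mem_nhdsWithin] with ε hε
    exact hbound ε hε

end SchilderHilbert
end
end
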